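/- arXiv:math/0402456 — 5 statements merged into one kernel-verified Lean document; each statement's English description precedes it below -/
import Mathlib

section
/- Let n ≥ 2 be an integer and ν > 0. Then for every z ∈ ℝ, ∫_{z²}^∞ (u - z²)^{(n-3)/2} (ν + u)^{-(n+ν)/2} du = (ν + z²)^{-(ν+1)/2} · Γ((n-1)/2)·Γ((ν+1)/2)/Γ((n+ν)/2). -/
open MeasureTheory Set

lemma real_beta_Ioo (a b : ℝ) (ha : 0 < a) (hb : 0 < b) :
    ∫ x in Ioo (0:ℝ) 1, x ^ (a - 1) * (1 - x) ^ (b - 1) =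
      Real.Gamma a * Real.Gamma b / Real.Gamma (a + b) := by
  have key := Complex.Gamma_mul_Gamma_eq_betaIntegral (s := (a : ℂ)) (t := (b : ℂ))
    (by simpa using ha) (by simpa using hb)
  have hbeta : Complex.betaIntegral (a : ℂ) (b : ℂ) =
      ((∫ x in Ioo (0:ℝ) 1, x ^ (a - 1) * (1 - x) ^ (b - 1) : ℝ) : ℂ) := by
    have hcong : ∀ x ∈ Ioc (0:ℝ) 1,
        (x : ℂ) ^ ((a : ℂ) - 1) * (1 - (x : ℂ)) ^ ((b : ℂ) - 1) =
          ((x ^ (a - 1) * (1 - x) ^ (b - 1) : ℝ) : ℂ) := by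
      intro x hx
      have hx0 : (0:ℝ) ≤ x := hx.1.le
      have hx1 : (0:ℝ) ≤ 1 - x := by linarith [hx.2]
      rw [Complex.ofReal_mul, Complex.ofReal_cpow hx0, Complex.ofReal_cpow hx1]
      push_cast
      ring_nf
    rw [Complex.betaIntegral, intervalIntegral.integral_of_le zero_le_one,
      setIntegral_congr_fun measurableSet_Ioc hcong,
      ← integral_Ioc_eq_integral_Ioo]
    exact integral_ofReal
  have hab : ((a : ℂ) + (b : ℂ)) = ((a + b : ℝ) : ℂ) := by push_cast; ring
  rw [hbeta, hab, Complex.Gamma_ofReal, Complex.Gamma_ofReal, Complex.Gamma_ofReal,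
    ← Complex.ofReal_mul, ← Complex.ofReal_mul] at key
  have key' : Real.Gamma a * Real.Gamma b =
      Real.Gamma (a + b) * ∫ x in Ioo (0:ℝ) 1, x ^ (a - 1) * (1 - x) ^ (b - 1) := by
    exact_mod_cast key
  have hG : Real.Gamma (a + b) ≠ 0 := (Real.Gamma_pos_of_pos (by linarith)).ne'
  rw [eq_div_iff hG]
  linear_combination -key'

lemma tail_beta_aux (a b c d : ℝ) (ha : 0 < a) (hb : 0 < b) (hc : 0 < c) :
    ∫ u in Ioi d, (u - d) ^ (a - 1) * (c + (u - d)) ^ (-(a + b)) =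
      c ^ (-b) * (Real.Gamma a * Real.Gamma b / Real.Gamma (a + b)) := by
  set f : ℝ → ℝ := fun x => d + c * x / (1 - x) with hf
  have himg : f '' Ioo 0 1 = Ioi d := by
    ext u
    constructor
    · rintro ⟨x, hx, rfl⟩
      have hx0 : 0 < x := hx.1
      have h1x : 0 < 1 - x := by linarith [hx.2]
      have : 0 < c * x / (1 - x) := by positivity
      simp only [hf, mem_Ioi]
      linarith
    · intro hu
      have ht : 0 < u - d := sub_pos.2 hu
      refine ⟨(u - d) / (c + (u - d)), ⟨by positivity, ?_⟩, ?_⟩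
      · rw [div_lt_one (by positivity)]; linarith
      · simp only [hf]
        have hct : c + (u - d) ≠ 0 := by positivity
        field_simp
        rw [show c + (u - d) - (u - d) = c by ring, mul_div_cancel_left₀ _ hc.ne']; ring
  have hderiv : ∀ x ∈ Ioo (0:ℝ) 1,
      HasDerivWithinAt f (c / (1 - x) ^ 2) (Ioo 0 1) x := by
    intro x hx
    have h1x : (1 : ℝ) - x ≠ 0 := by
      have := hx.2; intro h; rw [sub_eq_zero] at h; linarith
    have h' := (hasDerivAt_const x d).add
      (((hasDerivAt_id x).const_mul c).div ((hasDerivAt_id x).const_sub 1) h1x)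
    simp only [id_eq] at h'
    exact (h'.congr_deriv (by ring)).hasDerivWithinAt
  have hinj : InjOn f (Ioo 0 1) := by
    intro x hx y hy h
    have h1x : (1:ℝ) - x ≠ 0 := by
      have := hx.2; intro h'; rw [sub_eq_zero] at h'; linarith
    have h1y : (1:ℝ) - y ≠ 0 := by
      have := hy.2; intro h'; rw [sub_eq_zero] at h'; linarith
    have h' : c * x / (1 - x) = c * y / (1 - y) := by
      have := h; simpa [hf] using this
    field_simp at h'
    nlinarith [hc]
  rw [← himg, integral_image_eq_integral_abs_deriv_smul measurableSet_Ioo hderiv hinj]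
  have hcong : ∀ x ∈ Ioo (0:ℝ) 1,
      |c / (1 - x) ^ 2| • ((f x - d) ^ (a - 1) * (c + (f x - d)) ^ (-(a + b))) =
        c ^ (-b) * (x ^ (a - 1) * (1 - x) ^ (b - 1)) := by
    intro x hx
    have hx0 : 0 < x := hx.1
    have h1x : 0 < 1 - x := by linarith [hx.2]
    have hfd : f x - d = c * x / (1 - x) := by simp [hf]
    have hcx : c + c * x / (1 - x) = c / (1 - x) := by field_simp; ring
    rw [smul_eq_mul, hfd, hcx, abs_of_pos (by positivity),
      Real.div_rpow (by positivity) h1x.le, Real.mul_rpow hc.le hx0.le,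
      Real.div_rpow hc.le h1x.le]
    have hstep : c / (1 - x) ^ 2 * (c ^ (a - 1) * x ^ (a - 1) / (1 - x) ^ (a - 1) *
          (c ^ (-(a + b)) / (1 - x) ^ (-(a + b)))) =
        c ^ (a - 1) * c ^ (-(a + b)) * c * x ^ (a - 1) *
          ((1 - x) ^ (a - 1) * (1 - x) ^ (-(a + b)) * (1 - x) ^ 2)⁻¹ := by
      have h1 : (1 - x) ^ (a - 1) ≠ 0 := by positivity
      have h2 : (1 - x) ^ (-(a + b)) ≠ 0 := by positivity
      have h3 : ((1 - x) ^ 2 : ℝ) ≠ 0 := by positivity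
      field_simp
    rw [hstep, ← Real.rpow_add hc, ← Real.rpow_add_one hc.ne',
      show a - 1 + -(a + b) + 1 = -b by ring,
      ← Real.rpow_natCast (1 - x) 2, ← Real.rpow_add h1x, ← Real.rpow_add h1x,
      show a - 1 + -(a + b) + ((2:ℕ):ℝ) = -(b - 1) by push_cast; ring,
      Real.rpow_neg h1x.le, inv_inv]
    ring
  rw [setIntegral_congr_fun measurableSet_Ioo hcong, integral_const_mul,
    real_beta_Ioo a b ha hb]

theorem student_tail_integral_beta
    (n : ℕ) (hn : 2 ≤ n) (ν : ℝ) (hν : 0 < ν) (z : ℝ) :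
    ∫ u in Ioi (z ^ 2),
        (u - z ^ 2) ^ (((n : ℝ) - 3) / 2) * (ν + u) ^ (-(((n : ℝ) + ν) / 2)) =
      (ν + z ^ 2) ^ (-((ν + 1) / 2)) *
        (Real.Gamma (((n : ℝ) - 1) / 2) * Real.Gamma ((ν + 1) / 2) /
          Real.Gamma (((n : ℝ) + ν) / 2)) := by
  have hn' : (2:ℝ) ≤ (n:ℝ) := by exact_mod_cast hn
  have ha : 0 < ((n:ℝ) - 1) / 2 := by linarith
  have hb : 0 < (ν + 1) / 2 := by linarith
  have hc : 0 < ν + z ^ 2 := by positivity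
  have key := tail_beta_aux (((n:ℝ) - 1) / 2) ((ν + 1) / 2) (ν + z ^ 2) (z ^ 2) ha hb hc
  rw [show ((n:ℝ) - 1) / 2 + (ν + 1) / 2 = ((n:ℝ) + ν) / 2 by ring,
    show ((n:ℝ) - 1) / 2 - 1 = ((n:ℝ) - 3) / 2 by ring] at key
  rw [← key]
  refine setIntegral_congr_fun measurableSet_Ioi fun u hu => ?_
  rw [show ν + z ^ 2 + (u - z ^ 2) = ν + u by ring]
end

section
/- Let n ≥ 2 be an integer and ν > 0, and let g_ν(s) = C(ν,n)·(1+s/ν)^{-(n+ν)/2} be the n-dimensional Student-t generator. Then for every s ∈ ℝ, the n-dimensional tail function reduces to the one-dimensional Student-t tail: G[g_ν](s) = ∫_{-∞}^{-s} (Γ((ν+1)/2)/(Γ(ν/2)·√(νπ))) · (1 + t²/ν)^{-(ν+1)/2} dt. In particular G[g_ν](s) does not depend on n. -/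
open MeasureTheory Matrix Set

/-- The half-space tail function `G[g](s)` for an elliptic generator `g` in dimension `n`. -/
noncomputable def Gfun (n : ℕ) (g : ℝ → ℝ) (s : ℝ) : ℝ :=
  (2 * Real.pi ^ (((n : ℝ) - 1) / 2) / Real.Gamma (((n : ℝ) - 1) / 2)) *
    ∫ r in Ioi (0 : ℝ), r ^ ((n : ℝ) - 2) * ∫ z in Iio (-s), g (z ^ 2 + r ^ 2)

/-- The normalizing constant `C(ν,n) = Γ((ν+n)/2)/(Γ(ν/2)·√((νπ)ⁿ))`. -/
noncomputable def studentC (ν : ℝ) (n : ℕ) : ℝ :=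
  Real.Gamma ((ν + n) / 2) / (Real.Gamma (ν / 2) * Real.sqrt ((ν * Real.pi) ^ n))

/-- The `n`-dimensional Student-t generator with `ν` degrees of freedom. -/
noncomputable def studentG (ν : ℝ) (n : ℕ) (s : ℝ) : ℝ :=
  studentC ν n * (1 + s / ν) ^ (-(((n : ℝ) + ν) / 2))

open Real

lemma real_beta {a b : ℝ} (ha : 0 < a) (hb : 0 < b) :
    ∫ x in Ioo (0:ℝ) 1, x ^ (a - 1) * (1 - x) ^ (b - 1) =
      Real.Gamma a * Real.Gamma b / Real.Gamma (a + b) := by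
  have key : Complex.Gamma a * Complex.Gamma b
      = Complex.Gamma (a + b) * Complex.betaIntegral a b :=
    Complex.Gamma_mul_Gamma_eq_betaIntegral (by simpa using ha) (by simpa using hb)
  have hbeta : Complex.betaIntegral a b
      = ((∫ x in Ioo (0:ℝ) 1, x ^ (a - 1) * (1 - x) ^ (b - 1) : ℝ) : ℂ) := by
    rw [Complex.betaIntegral, intervalIntegral.integral_of_le zero_le_one,
      ← MeasureTheory.integral_Ioc_eq_integral_Ioo (f := fun x => x ^ (a-1) * (1-x) ^ (b-1))]
    rw [show ((∫ x in Ioc (0:ℝ) 1, x ^ (a - 1) * (1 - x) ^ (b - 1) : ℝ) : ℂ)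
        = ∫ x in Ioc (0:ℝ) 1, ((x ^ (a - 1) * (1 - x) ^ (b - 1) : ℝ) : ℂ) from
      (integral_ofReal).symm]
    refine setIntegral_congr_fun measurableSet_Ioc fun x hx => ?_
    have h1 : (0:ℝ) ≤ x := hx.1.le
    have h2 : (0:ℝ) ≤ 1 - x := by linarith [hx.2]
    rw [Complex.ofReal_mul, Complex.ofReal_cpow h1, Complex.ofReal_cpow h2]
    push_cast
    ring
  rw [hbeta] at key
  have hG : ∀ c : ℝ, Complex.Gamma (c:ℂ) = (Real.Gamma c : ℂ) := fun c => Complex.Gamma_ofReal c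
  rw [show ((a:ℂ) + b) = ((a + b : ℝ) : ℂ) by push_cast; ring, hG, hG, hG] at key
  have key2 : Real.Gamma a * Real.Gamma b
      = Real.Gamma (a + b) * ∫ x in Ioo (0:ℝ) 1, x ^ (a - 1) * (1 - x) ^ (b - 1) := by
    exact_mod_cast key
  rw [key2]
  field_simp [(Real.Gamma_pos_of_pos (by linarith : 0 < a + b)).ne']

lemma beta_Ioi {a b : ℝ} (ha : 0 < a) (hb : 0 < b) :
    ∫ t in Ioi (0:ℝ), t ^ (a - 1) * (1 + t) ^ (-(a + b)) =
      Real.Gamma a * Real.Gamma b / Real.Gamma (a + b) := by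
  set f : ℝ → ℝ := fun x => x / (1 - x) with hf
  have himg : f '' Ioo 0 1 = Ioi (0:ℝ) := by
    ext y
    constructor
    · rintro ⟨x, hx, rfl⟩
      exact div_pos hx.1 (by linarith [hx.2])
    · intro hy
      have hy' : 0 < y := hy
      have hy1 : (0:ℝ) < 1 + y := by linarith
      refine ⟨y / (1 + y), ⟨div_pos hy' hy1, ?_⟩, ?_⟩
      · rw [div_lt_one hy1]; linarith
      · show y / (1 + y) / (1 - y / (1 + y)) = y
        rw [show (1:ℝ) - y / (1 + y) = 1 / (1 + y) by field_simp; ring]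
        field_simp
  have hderiv : ∀ x ∈ Ioo (0:ℝ) 1, HasDerivWithinAt f ((1 - x)^2)⁻¹ (Ioo 0 1) x := by
    intro x hx
    have h1 : (1 : ℝ) - x ≠ 0 := by have := hx.2; intro h; linarith
    have : HasDerivAt f ((1 * (1-x) - x * (0-1)) / (1-x)^2) x := by
      exact (hasDerivAt_id x).div ((hasDerivAt_const x 1).sub (hasDerivAt_id x)) h1
    have h2 : (1 * (1-x) - x * (0-1)) / (1-x)^2 = ((1 - x)^2)⁻¹ := by
      field_simp
      ring
    rw [h2] at this
    exact this.hasDerivWithinAt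
  have hinj : InjOn f (Ioo 0 1) := by
    intro x hx y hy hxy
    have h1 : (1:ℝ) - x ≠ 0 := by have := hx.2; intro h; linarith
    have h2 : (1:ℝ) - y ≠ 0 := by have := hy.2; intro h; linarith
    have : x * (1 - y) = y * (1 - x) := by
      simp only [hf] at hxy; field_simp at hxy
      linarith [hxy]
    nlinarith [this]
  have key := integral_image_eq_integral_abs_deriv_smul measurableSet_Ioo hderiv hinj
    (fun t => t ^ (a - 1) * (1 + t) ^ (-(a + b)))
  rw [himg] at key
  rw [key, ← real_beta ha hb]
  refine setIntegral_congr_fun measurableSet_Ioo fun x hx => ?_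
  have hx0 : 0 < x := hx.1
  have hx1 : 0 < 1 - x := by linarith [hx.2]
  have hfx : f x = x * (1 - x)⁻¹ := by rw [hf]; ring
  have h1f : 1 + f x = (1 - x)⁻¹ := by
    show 1 + x / (1 - x) = (1 - x)⁻¹
    field_simp
    ring
  have e1 : ((1:ℝ)-x)⁻¹ = (1-x) ^ (-1:ℝ) := (Real.rpow_neg_one _).symm
  rw [smul_eq_mul, h1f, hfx, e1, ← Real.rpow_natCast (1-x) 2, ← Real.rpow_neg hx1.le,
    Real.mul_rpow hx0.le (Real.rpow_nonneg hx1.le _),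
    ← Real.rpow_mul hx1.le, ← Real.rpow_mul hx1.le,
    abs_of_nonneg (Real.rpow_nonneg hx1.le _)]
  rw [show (1-x) ^ (-((2:ℕ):ℝ)) * (x ^ (a-1) * (1-x) ^ ((-1)*(a-1)) * (1-x) ^ ((-1)*(-(a+b))))
      = x ^ (a-1) * ((1-x) ^ (-((2:ℕ):ℝ)) * (1-x) ^ ((-1)*(a-1)) * (1-x) ^ ((-1)*(-(a+b)))) from
    by ring, ← Real.rpow_add hx1, ← Real.rpow_add hx1]
  congr 1
  push_cast
  ring

lemma rpow_one_add_sq {p q : ℝ} (hp : -1 < p) (hq : (p + 1) / 2 < q) :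
    ∫ r in Ioi (0:ℝ), r ^ p * (1 + r ^ 2) ^ (-q) =
      Real.Gamma ((p + 1) / 2) * Real.Gamma (q - (p + 1) / 2) / (2 * Real.Gamma q) := by
  have ha : 0 < (p + 1) / 2 := by linarith
  have hb : 0 < q - (p + 1) / 2 := by linarith
  have key := integral_comp_rpow_Ioi
    (fun t => t ^ ((p + 1) / 2 - 1) * (1 + t) ^ (-((p + 1) / 2 + (q - (p + 1) / 2))))
    (two_ne_zero (α := ℝ))
  rw [beta_Ioi ha hb] at key
  have hcongr : ∀ x ∈ Ioi (0:ℝ),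
      (|(2:ℝ)| * x ^ ((2:ℝ) - 1)) •
        ((x ^ (2:ℝ)) ^ ((p + 1) / 2 - 1) * (1 + x ^ (2:ℝ)) ^ (-((p + 1) / 2 + (q - (p + 1) / 2))))
      = 2 * (x ^ p * (1 + x ^ 2) ^ (-q)) := by
    intro x hx
    have hx0 : (0:ℝ) < x := hx
    rw [smul_eq_mul, ← Real.rpow_mul hx0.le]
    rw [show (2:ℝ) * ((p + 1) / 2 - 1) = p - 1 by ring,
      show -((p + 1) / 2 + (q - (p + 1) / 2)) = -q by ring,
      show (2:ℝ) - 1 = 1 by norm_num, Real.rpow_one, abs_two,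
      show x ^ (2:ℝ) = x ^ (2:ℕ) from Real.rpow_natCast x 2]
    have hxx : x * x ^ (p - 1) = x ^ p := by
      have h := Real.rpow_add hx0 1 (p - 1)
      rw [Real.rpow_one, show (1:ℝ) + (p - 1) = p by ring] at h
      exact h.symm
    rw [show (2:ℝ) * x * (x ^ (p - 1) * (1 + x ^ (2:ℕ)) ^ (-q))
        = 2 * ((x * x ^ (p - 1)) * (1 + x ^ (2:ℕ)) ^ (-q)) by ring, hxx]
  rw [setIntegral_congr_fun measurableSet_Ioi hcongr, MeasureTheory.integral_const_mul,
    show (p + 1) / 2 + (q - (p + 1) / 2) = q by ring] at key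
  linear_combination key / 2

lemma rpow_one_add_sq_div {p q c : ℝ} (hp : -1 < p) (hq : (p + 1) / 2 < q) (hc : 0 < c) :
    ∫ r in Ioi (0:ℝ), r ^ p * (1 + r ^ 2 / c) ^ (-q) =
      c ^ ((p + 1) / 2) *
        (Real.Gamma ((p + 1) / 2) * Real.Gamma (q - (p + 1) / 2) / (2 * Real.Gamma q)) := by
  have hsc : 0 < Real.sqrt c := Real.sqrt_pos.mpr hc
  have key := integral_comp_mul_left_Ioi (fun y => y ^ p * (1 + y ^ 2 / c) ^ (-q)) 0 hsc
  rw [mul_zero] at key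
  have hcongr : ∀ x ∈ Ioi (0:ℝ),
      (fun y => y ^ p * (1 + y ^ 2 / c) ^ (-q)) (Real.sqrt c * x)
      = c ^ (p / 2) * (x ^ p * (1 + x ^ 2) ^ (-q)) := by
    intro x hx
    have hx0 : (0:ℝ) < x := hx
    simp only
    rw [show (Real.sqrt c * x) ^ 2 / c = x ^ 2 by
        rw [mul_pow, Real.sq_sqrt hc.le]; field_simp,
      Real.mul_rpow (Real.sqrt_nonneg c) hx0.le, Real.sqrt_eq_rpow,
      ← Real.rpow_mul hc.le, show (1:ℝ) / 2 * p = p / 2 by ring]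
    ring
  rw [setIntegral_congr_fun measurableSet_Ioi hcongr, MeasureTheory.integral_const_mul,
    rpow_one_add_sq hp hq, smul_eq_mul] at key
  have key2 : ∫ x in Ioi (0:ℝ), x ^ p * (1 + x ^ 2 / c) ^ (-q)
      = Real.sqrt c * (c ^ (p / 2) *
        (Real.Gamma ((p + 1) / 2) * Real.Gamma (q - (p + 1) / 2) / (2 * Real.Gamma q))) := by
    rw [key, ← mul_assoc, mul_inv_cancel₀ hsc.ne', one_mul]
  rw [key2, Real.sqrt_eq_rpow, ← mul_assoc, ← Real.rpow_add hc]
  congr 2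
  ring

lemma integrableOn_rpow_one_add_sq_div {p q c : ℝ} (hp : 0 ≤ p) (hq : (p + 1) / 2 < q)
    (hc : 0 < c) :
    IntegrableOn (fun r : ℝ => r ^ p * (1 + r ^ 2 / c) ^ (-q)) (Ioi 0) := by
  have hq0 : 0 < q := by linarith
  have hmeas : Measurable (fun r : ℝ => r ^ p * (1 + r ^ 2 / c) ^ (-q)) := by fun_prop
  have hbase : ∀ r : ℝ, (0:ℝ) < 1 + r ^ 2 / c := fun r => by positivity
  have h1 : IntegrableOn (fun r : ℝ => r ^ p * (1 + r ^ 2 / c) ^ (-q)) (Ioc 0 1) := by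
    refine Integrable.mono' (integrable_const 1) hmeas.aestronglyMeasurable ?_
    rw [ae_restrict_iff' measurableSet_Ioc]
    refine ae_of_all _ fun r hr => ?_
    have h0 : (0:ℝ) ≤ r := hr.1.le
    rw [Real.norm_of_nonneg (by positivity)]
    have e1 : r ^ p ≤ 1 := Real.rpow_le_one h0 hr.2 hp
    have e2 : (1 + r ^ 2 / c) ^ (-q) ≤ 1 :=
      Real.rpow_le_one_of_one_le_of_nonpos (le_add_of_nonneg_right (by positivity)) (by linarith)
    calc r ^ p * (1 + r ^ 2 / c) ^ (-q) ≤ 1 * 1 :=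
          mul_le_mul e1 e2 (by positivity) zero_le_one
      _ = 1 := by norm_num
  have h2 : IntegrableOn (fun r : ℝ => r ^ p * (1 + r ^ 2 / c) ^ (-q)) (Ioi 1) := by
    refine Integrable.mono' (((integrableOn_Ioi_rpow_of_lt (by linarith : p - 2 * q < -1)
      one_pos).const_mul (c ^ q))) hmeas.aestronglyMeasurable ?_
    rw [ae_restrict_iff' measurableSet_Ioi]
    refine ae_of_all _ fun r hr => ?_
    have h0 : (0:ℝ) < r := lt_trans one_pos hr
    rw [Real.norm_of_nonneg (by positivity)]
    have e1 : (1 + r ^ 2 / c) ^ (-q) ≤ (r ^ 2 / c) ^ (-q) :=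
      Real.rpow_le_rpow_of_nonpos (by positivity) (by linarith) (by linarith)
    have e2 : (r ^ 2 / c) ^ (-q) = c ^ q * r ^ (-(2*q)) := by
      rw [Real.div_rpow (by positivity) hc.le, ← Real.rpow_natCast r 2,
        ← Real.rpow_mul h0.le, Real.rpow_neg hc.le,
        show ((2:ℕ):ℝ) * -q = -(2*q) by push_cast; ring]
      field_simp
    calc r ^ p * (1 + r ^ 2 / c) ^ (-q) ≤ r ^ p * (c ^ q * r ^ (-(2*q))) := by
          refine mul_le_mul_of_nonneg_left (e2 ▸ e1) (by positivity)
      _ = c ^ q * r ^ (p - 2 * q) := by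
          rw [show p - 2*q = p + -(2*q) by ring, Real.rpow_add h0]; ring
  have := h1.union h2
  rwa [Ioc_union_Ioi_eq_Ioi zero_le_one] at this

lemma integrable_one_add_sq_div {q c : ℝ} (hq : 1 / 2 < q) (hc : 0 < c) :
    Integrable (fun z : ℝ => (1 + z ^ 2 / c) ^ (-q)) := by
  have hmeas : Measurable (fun z : ℝ => (1 + z ^ 2 / c) ^ (-q)) := by fun_prop
  have hIoi : IntegrableOn (fun z : ℝ => (1 + z ^ 2 / c) ^ (-q)) (Ioi 0) := by
    have := integrableOn_rpow_one_add_sq_div (p := 0) (q := q) le_rfl (by linarith) hc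
    refine this.congr_fun (fun z hz => ?_) measurableSet_Ioi
    simp only [Real.rpow_zero, one_mul]
  have hIio : IntegrableOn (fun z : ℝ => (1 + z ^ 2 / c) ^ (-q)) (Iio 0) := by
    have hneg : IntegrableOn (fun z : ℝ => (1 + (-z) ^ 2 / c) ^ (-q)) (Ioi 0) := by
      refine hIoi.congr_fun (fun z _ => ?_) measurableSet_Ioi
      rw [neg_pow]; norm_num
    have h_map_neg : (volume.restrict (Ioi (0:ℝ))).map Neg.neg = volume.restrict (Iio 0) := by
      conv => rhs; rw [← Measure.map_neg_eq_self (volume : Measure ℝ),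
        measurableEmbedding_neg.restrict_map]
      simp
    rw [IntegrableOn, ← h_map_neg, measurableEmbedding_neg.integrable_map_iff]
    exact hneg
  have : IntegrableOn (fun z : ℝ => (1 + z ^ 2 / c) ^ (-q)) (Iio 0 ∪ Ici 0) := by
    refine hIio.union ?_
    rw [integrableOn_Ici_iff_integrableOn_Ioi]
    exact hIoi
  rwa [Iio_union_Ici, integrableOn_univ] at this


lemma inner_integral (n : ℕ) (hn : 2 ≤ n) (ν : ℝ) (hν : 0 < ν) (z : ℝ) :
    ∫ r in Ioi (0:ℝ), r ^ ((n:ℝ) - 2) * studentG ν n (z ^ 2 + r ^ 2)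
      = (studentC ν n * ν ^ (((n:ℝ) - 1) / 2) *
          (Real.Gamma (((n:ℝ) - 1) / 2) * Real.Gamma ((ν + 1) / 2) /
            (2 * Real.Gamma (((n:ℝ) + ν) / 2)))) *
        (1 + z ^ 2 / ν) ^ (-((ν + 1) / 2)) := by
  have hn2 : (2:ℝ) ≤ (n:ℝ) := by exact_mod_cast hn
  set p : ℝ := (n:ℝ) - 2 with hp
  set q : ℝ := ((n:ℝ) + ν) / 2 with hq
  set c : ℝ := ν + z ^ 2 with hc
  set w : ℝ := 1 + z ^ 2 / ν with hw
  have hcpos : 0 < c := by positivity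
  have hwpos : 0 < w := by positivity
  have hpt : ∀ r : ℝ, r ^ p * studentG ν n (z ^ 2 + r ^ 2)
      = (studentC ν n * w ^ (-q)) * (r ^ p * (1 + r ^ 2 / c) ^ (-q)) := by
    intro r
    rw [studentG]
    have hfac : 1 + (z ^ 2 + r ^ 2) / ν = w * (1 + r ^ 2 / c) := by
      rw [hw, hc]; field_simp; ring
    rw [hfac, Real.mul_rpow hwpos.le (by positivity)]
    ring
  rw [setIntegral_congr_fun measurableSet_Ioi (fun r _ => hpt r),
    MeasureTheory.integral_const_mul,
    rpow_one_add_sq_div (by rw [hp]; linarith) (by rw [hp, hq]; linarith) hcpos]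
  have he1 : (p + 1) / 2 = ((n:ℝ) - 1) / 2 := by rw [hp]; ring
  have he2 : q - (p + 1) / 2 = (ν + 1) / 2 := by rw [hp, hq]; ring
  have hcw : c = ν * w := by rw [hc, hw]; field_simp
  rw [he2, he1, hcw, Real.mul_rpow hν.le hwpos.le]
  rw [show studentC ν n * w ^ (-q) *
      (ν ^ (((n:ℝ) - 1) / 2) * w ^ (((n:ℝ) - 1) / 2) *
        (Real.Gamma (((n:ℝ) - 1) / 2) * Real.Gamma ((ν + 1) / 2) / (2 * Real.Gamma q)))
      = studentC ν n * ν ^ (((n:ℝ) - 1) / 2) *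
        (Real.Gamma (((n:ℝ) - 1) / 2) * Real.Gamma ((ν + 1) / 2) / (2 * Real.Gamma q)) *
        (w ^ (-q) * w ^ (((n:ℝ) - 1) / 2)) from by ring,
    ← Real.rpow_add hwpos, show -q + ((n:ℝ) - 1) / 2 = -((ν + 1) / 2) by rw [hq]; ring]

theorem Gfun_studentG_eq_one_dim_student_tail
    (n : ℕ) (hn : 2 ≤ n) (ν : ℝ) (hν : 0 < ν) (s : ℝ) :
    Gfun n (studentG ν n) s =
      ∫ t in Iio (-s),
        (Real.Gamma ((ν + 1) / 2) / (Real.Gamma (ν / 2) * Real.sqrt (ν * Real.pi))) *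
          (1 + t ^ 2 / ν) ^ (-((ν + 1) / 2)) := by
  have hn2 : (2:ℝ) ≤ (n:ℝ) := by exact_mod_cast hn
  set D : ℝ := studentC ν n * ν ^ (((n:ℝ) - 1) / 2) *
      (Real.Gamma (((n:ℝ) - 1) / 2) * Real.Gamma ((ν + 1) / 2) /
        (2 * Real.Gamma (((n:ℝ) + ν) / 2))) with hD
  have hq : ((n:ℝ) - 2 + 1) / 2 < ((n:ℝ) + ν) / 2 := by linarith
  have hstudent_nonneg : 0 < studentC ν n := by
    rw [studentC]
    have h1 : 0 < Real.Gamma ((ν + n) / 2) := Real.Gamma_pos_of_pos (by positivity)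
    have h2 : 0 < Real.Gamma (ν / 2) := Real.Gamma_pos_of_pos (by positivity)
    have h3 : 0 < Real.sqrt ((ν * Real.pi) ^ n) :=
      Real.sqrt_pos.mpr (by positivity)
    positivity
  -- the two-variable integrand
  set F : ℝ → ℝ → ℝ := fun r z => r ^ ((n:ℝ) - 2) * studentG ν n (z ^ 2 + r ^ 2) with hF
  have hFfac : ∀ z r : ℝ, F r z
      = (studentC ν n * (1 + z ^ 2 / ν) ^ (-(((n:ℝ) + ν) / 2))) *
        (r ^ ((n:ℝ) - 2) * (1 + r ^ 2 / (ν + z ^ 2)) ^ (-(((n:ℝ) + ν) / 2))) := by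
    intro z r
    rw [hF]
    simp only
    rw [studentG]
    have hfac : 1 + (z ^ 2 + r ^ 2) / ν
        = (1 + z ^ 2 / ν) * (1 + r ^ 2 / (ν + z ^ 2)) := by
      field_simp; ring
    rw [hfac, Real.mul_rpow (by positivity) (by positivity)]
    ring
  have hFz_int : ∀ z : ℝ, IntegrableOn (fun r => F r z) (Ioi 0) := by
    intro z
    have := (integrableOn_rpow_one_add_sq_div (by linarith : (0:ℝ) ≤ (n:ℝ) - 2) hq
      (by positivity : (0:ℝ) < ν + z ^ 2)).const_mul
      (studentC ν n * (1 + z ^ 2 / ν) ^ (-(((n:ℝ) + ν) / 2)))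
    exact IntegrableOn.congr_fun this (fun r _ => (hFfac z r).symm) measurableSet_Ioi
  have hF_nonneg : ∀ z r : ℝ, 0 < r → 0 ≤ F r z := by
    intro z r hr
    rw [hF]
    simp only
    rw [studentG]
    positivity
  have hnorm : ∀ z : ℝ, (∫ r in Ioi (0:ℝ), ‖F r z‖) = D * (1 + z ^ 2 / ν) ^ (-((ν + 1) / 2)) := by
    intro z
    rw [setIntegral_congr_fun measurableSet_Ioi
      (fun r hr => Real.norm_of_nonneg (hF_nonneg z r hr))]
    exact inner_integral n hn ν hν z
  have hInt : Integrable (Function.uncurry F)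
      ((volume.restrict (Ioi (0:ℝ))).prod (volume.restrict (Iio (-s)))) := by
    have hmeas : AEStronglyMeasurable (Function.uncurry F)
        ((volume.restrict (Ioi (0:ℝ))).prod (volume.restrict (Iio (-s)))) := by
      apply Measurable.aestronglyMeasurable
      rw [hF]
      unfold Function.uncurry studentG studentC
      fun_prop
    rw [MeasureTheory.integrable_prod_iff' hmeas]
    constructor
    · exact ae_of_all _ fun z => hFz_int z
    · have base : Integrable (fun z : ℝ => D * (1 + z ^ 2 / ν) ^ (-((ν + 1) / 2))) :=
        (integrable_one_add_sq_div (by linarith : (1:ℝ)/2 < (ν+1)/2) hν).const_mul D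
      exact IntegrableOn.congr_fun base.integrableOn
        (fun z _ => (hnorm z).symm) measurableSet_Iio
  have hswap : ∫ r in Ioi (0:ℝ), ∫ z in Iio (-s), F r z
      = ∫ z in Iio (-s), ∫ r in Ioi (0:ℝ), F r z :=
    MeasureTheory.integral_integral_swap hInt
  rw [Gfun]
  rw [setIntegral_congr_fun measurableSet_Ioi
    (fun r _ => (MeasureTheory.integral_const_mul (r ^ ((n:ℝ)-2)) _).symm :
      ∀ r ∈ Ioi (0:ℝ), r ^ ((n:ℝ) - 2) * (∫ z in Iio (-s), studentG ν n (z ^ 2 + r ^ 2))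
        = ∫ z in Iio (-s), F r z)]
  rw [hswap]
  rw [setIntegral_congr_fun measurableSet_Iio
    (fun z _ => inner_integral n hn ν hν z :
      ∀ z ∈ Iio (-s), (∫ r in Ioi (0:ℝ), F r z)
        = D * (1 + z ^ 2 / ν) ^ (-((ν + 1) / 2)))]
  rw [MeasureTheory.integral_const_mul, MeasureTheory.integral_const_mul, ← mul_assoc]
  congr 1
  -- constant identity
  rw [studentC]
  have hπ : 0 < Real.pi := Real.pi_pos
  have hνπ : 0 < ν * Real.pi := by positivity
  have hG1 : 0 < Real.Gamma (((n:ℝ) - 1) / 2) := Real.Gamma_pos_of_pos (by linarith)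
  have hG2 : 0 < Real.Gamma (((n:ℝ) + ν) / 2) := Real.Gamma_pos_of_pos (by positivity)
  have hG3 : 0 < Real.Gamma (ν / 2) := Real.Gamma_pos_of_pos (by positivity)
  have hGsum : Real.Gamma ((ν + (n:ℝ)) / 2) = Real.Gamma (((n:ℝ) + ν) / 2) := by ring_nf
  have hsqrt_pow : Real.sqrt ((ν * Real.pi) ^ n) = (ν * Real.pi) ^ ((n:ℝ) / 2) := by
    rw [Real.sqrt_eq_rpow, ← Real.rpow_natCast (ν * Real.pi) n, ← Real.rpow_mul hνπ.le]
    ring_nf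
  have hsqrt : Real.sqrt (ν * Real.pi) = (ν * Real.pi) ^ ((1:ℝ) / 2) := Real.sqrt_eq_rpow _
  have hmul : Real.pi ^ (((n:ℝ) - 1) / 2) * ν ^ (((n:ℝ) - 1) / 2)
      = (ν * Real.pi) ^ (((n:ℝ) - 1) / 2) := by
    rw [Real.mul_rpow hν.le hπ.le]; ring
  have hpowadd : (ν * Real.pi) ^ (((n:ℝ) - 1) / 2) * (ν * Real.pi) ^ ((1:ℝ) / 2)
      = (ν * Real.pi) ^ ((n:ℝ) / 2) := by
    rw [← Real.rpow_add hνπ]; ring_nf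
  rw [hGsum, hsqrt_pow, hsqrt]
  set A := (ν * Real.pi) ^ (((n:ℝ) - 1) / 2)
  set B := (ν * Real.pi) ^ ((1:ℝ) / 2)
  set Cn := (ν * Real.pi) ^ ((n:ℝ) / 2)
  have hA : 0 < A := Real.rpow_pos_of_pos hνπ _
  have hB : 0 < B := Real.rpow_pos_of_pos hνπ _
  have hCn : 0 < Cn := Real.rpow_pos_of_pos hνπ _
  field_simp
  linear_combination hpowadd + B * hmul
end

section
/- Let ν > 0 and s > √ν. Then the univariate Student-t tail probability admits the hypergeometric closed form: (Γ((ν+1)/2)/(Γ(ν/2)·√(νπ))) · ∫_s^∞ (1 + t²/ν)^{-(ν+1)/2} dt = (1/(ν√π)) · (ν/s²)^{ν/2} · (Γ((ν+1)/2)/Γ(ν/2)) · ₂F₁((1+ν)/2, ν/2; 1+ν/2; -ν/s²). -/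
open MeasureTheory Set


open Filter Topology

lemma poch_pos {a : ℝ} (ha : 0 < a) (k : ℕ) : 0 < (ascPochhammer ℝ k).eval a :=
  ascPochhammer_pos k a ha

lemma csucc (a : ℝ) (k : ℕ) :
    (ascPochhammer ℝ (k+1)).eval a / (k+1).factorial
      = ((ascPochhammer ℝ k).eval a / k.factorial) * ((a + k) / (k + 1)) := by
  rw [ascPochhammer_succ_eval, Nat.factorial_succ, div_mul_div_comm]
  congr 1
  push_cast
  ring

lemma summable_binom {a : ℝ} (ha : 0 < a) {x : ℝ} (hx : |x| < 1) :
    Summable (fun k : ℕ => ((ascPochhammer ℝ k).eval a / k.factorial) * x ^ k) := by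
  rcases eq_or_ne x 0 with rfl | hx0
  · apply summable_of_ne_finset_zero (s := {0})
    intro k hk
    simp only [Finset.mem_singleton] at hk
    simp [zero_pow hk]
  · apply summable_of_ratio_test_tendsto_lt_one hx
    · refine Eventually.of_forall fun k => ?_
      have := poch_pos ha k
      positivity
    · have h1 : Tendsto (fun k : ℕ => (a + k) / (k + 1)) atTop (𝓝 1) := by
        have : (fun k : ℕ => (a + k) / (k + 1)) =
            fun k : ℕ => (a / (k+1) + k/(k+1)) := by
          funext k; ring
        rw [this]
        have t1 : Tendsto (fun k : ℕ => a / (k+1)) atTop (𝓝 0) := by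
          apply Tendsto.div_atTop tendsto_const_nhds
          exact tendsto_atTop_add_const_right _ 1 tendsto_natCast_atTop_atTop
        have t2 : Tendsto (fun k : ℕ => (k:ℝ)/(k+1)) atTop (𝓝 1) := by
          have := tendsto_natCast_div_add_atTop (𝕜 := ℝ) 1
          simpa using this
        simpa using t1.add t2
      have h2 : Tendsto (fun k : ℕ => ((a + k) / (k + 1)) * |x|) atTop (𝓝 (1 * |x|)) :=
        h1.mul_const _
      rw [one_mul] at h2
      apply h2.congr'
      filter_upwards [eventually_atTop.mpr ⟨0, fun k _ => trivial⟩] with k _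
      have hp := poch_pos ha k
      have hfac : (0:ℝ) < k.factorial := by positivity
      have hak : (0:ℝ) < a + k := by positivity
      rw [csucc, pow_succ]
      have hu : (0:ℝ) < (ascPochhammer ℝ k).eval a / k.factorial := by positivity
      have hxk : (0:ℝ) < |x| ^ k := by positivity
      simp only [norm_mul, Real.norm_eq_abs, abs_pow]
      rw [abs_of_pos hu, abs_of_pos (by positivity : (0:ℝ) < (a+k)/(k+1))]
      field_simp

open FormalMultilinearSeries in
noncomputable def binomSeries (a : ℝ) : FormalMultilinearSeries ℝ ℝ ℝ :=
  FormalMultilinearSeries.ofScalars ℝ (fun k => (ascPochhammer ℝ k).eval a / k.factorial)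

lemma mem_ball_one {y : ℝ} (hy : |y| < 1) : y ∈ Metric.eball (0:ℝ) 1 := by
  rw [EMetric.mem_ball, edist_zero_right, ← ENNReal.coe_one, enorm_eq_nnnorm, ENNReal.coe_lt_coe,
    ← NNReal.coe_lt_coe]
  simpa [Real.norm_eq_abs] using hy

lemma binomSeries_radius {a : ℝ} (ha : 0 < a) : 1 ≤ (binomSeries a).radius := by
  refine ENNReal.le_of_forall_nnreal_lt (fun r hr => ?_)
  apply FormalMultilinearSeries.le_radius_of_summable_norm
  have hs := summable_binom ha (x := (r:ℝ)) (by simpa using hr)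
  apply hs.congr
  intro k
  rw [binomSeries, FormalMultilinearSeries.ofScalars_norm, Real.norm_eq_abs,
    abs_of_pos (div_pos (poch_pos ha k) (by positivity))]

lemma binom_hasFPSB {a : ℝ} (ha : 0 < a) :
    HasFPowerSeriesOnBall (binomSeries a).sum (binomSeries a) 0 1 :=
  ((binomSeries a).hasFPowerSeriesOnBall
    (lt_of_lt_of_le one_pos (binomSeries_radius ha))).mono one_pos (binomSeries_radius ha)

lemma binom_hasSum {a : ℝ} (ha : 0 < a) {x : ℝ} (hx : |x| < 1) :
    HasSum (fun k : ℕ => ((ascPochhammer ℝ k).eval a / k.factorial) * x ^ k)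
      ((binomSeries a).sum x) := by
  have := (binom_hasFPSB ha).hasSum (mem_ball_one hx)
  rw [zero_add] at this
  refine this.congr_fun fun k => ?_
  rw [binomSeries, FormalMultilinearSeries.ofScalars_apply_eq, smul_eq_mul]

lemma derivSeries_apply_one {a : ℝ} (n : ℕ) (x : ℝ) :
    ((binomSeries a).derivSeries n (fun _ => x)) 1
      = (n+1) * ((ascPochhammer ℝ (n+1)).eval a / (n+1).factorial) * x ^ n := by
  have diag := (binomSeries a).derivSeries_apply_diag n x
  have hsmul : ∀ y : ℝ, ((binomSeries a).derivSeries n (fun _ => x)) y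
      = y * ((binomSeries a).derivSeries n (fun _ => x)) 1 := by
    intro y
    have : y • (1:ℝ) = y := by simp
    rw [← this, ContinuousLinearMap.map_smul, smul_eq_mul, this]
  rcases eq_or_ne x 0 with rfl | hx0
  · rcases Nat.eq_zero_or_pos n with rfl | hn
    · have h01 : (fun _ : Fin 0 => (0:ℝ)) = (fun _ : Fin 0 => (1:ℝ)) := by
        funext i; exact absurd i.2 (by simp)
      rw [h01]
      have diag1 := (binomSeries a).derivSeries_apply_diag 0 (1:ℝ)
      rw [diag1]
      have : (binomSeries a) 1 (fun _ => (1:ℝ)) = (ascPochhammer ℝ 1).eval a / Nat.factorial 1 := by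
        rw [binomSeries, FormalMultilinearSeries.ofScalars_apply_eq]; simp
      rw [this]
      simp [ascPochhammer_one]
    · have : ((binomSeries a).derivSeries n (fun _ => (0:ℝ))) = 0 :=
        ContinuousMultilinearMap.map_coord_zero _ ⟨0, hn⟩ rfl
      rw [this]
      simp [zero_pow (Nat.pos_iff_ne_zero.mp hn)]
  · have := hsmul x
    rw [diag] at this
    have hx' : ((binomSeries a).derivSeries n (fun _ => x)) 1
        = (↑(n+1) • (binomSeries a) (n+1) (fun _ => x)) / x := by
      rw [this]; field_simp
    rw [hx']
    rw [binomSeries, FormalMultilinearSeries.ofScalars, nsmul_eq_mul]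
    simp only [ContinuousMultilinearMap.smul_apply, ContinuousMultilinearMap.mkPiAlgebraFin_apply,
      List.ofFn_const, List.prod_replicate, smul_eq_mul]
    rw [pow_succ]
    field_simp
    push_cast
    ring

lemma binom_hasSum_deriv {a : ℝ} (ha : 0 < a) {x : ℝ} (hx : |x| < 1) :
    HasSum (fun n : ℕ => ((n:ℝ)+1) * ((ascPochhammer ℝ (n+1)).eval a / (n+1).factorial) * x ^ n)
      (deriv (binomSeries a).sum x) := by
  have h := ((binom_hasFPSB ha).fderiv).hasSum (mem_ball_one hx)
  rw [zero_add] at h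
  have h2 := (ContinuousLinearMap.apply ℝ ℝ (1:ℝ)).hasSum h
  simp only [ContinuousLinearMap.apply_apply] at h2
  rw [fderiv_apply_one_eq_deriv] at h2
  refine h2.congr_fun fun n => ?_
  rw [derivSeries_apply_one]

lemma binom_differentiableAt {a : ℝ} (ha : 0 < a) {x : ℝ} (hx : |x| < 1) :
    DifferentiableAt ℝ (binomSeries a).sum x :=
  ((binom_hasFPSB ha).analyticAt_of_mem (mem_ball_one hx)).differentiableAt

lemma binom_ode {a : ℝ} (ha : 0 < a) {x : ℝ} (hx : |x| < 1) :
    (1 - x) * deriv (binomSeries a).sum x = a * (binomSeries a).sum x := by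
  have hd := binom_hasSum_deriv ha hx
  have hf := binom_hasSum ha hx
  set g : ℕ → ℝ := fun n => (n:ℝ) * ((ascPochhammer ℝ n).eval a / n.factorial) * x ^ n with hg
  have hxd : HasSum g (x * deriv (binomSeries a).sum x) := by
    have h2 : HasSum (fun n : ℕ => g (n+1)) (x * deriv (binomSeries a).sum x) := by
      refine (hd.mul_left x).congr_fun fun n => ?_
      simp only [hg]
      push_cast
      ring
    have h3 := (hasSum_nat_add_iff (f := g) 1).mp h2
    simpa [hg] using h3
  have hkey : ∀ n : ℕ, ((n:ℝ)+1) * ((ascPochhammer ℝ (n+1)).eval a / (n+1).factorial)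
      = (a + n) * ((ascPochhammer ℝ n).eval a / n.factorial) := by
    intro n
    rw [csucc]
    have : ((n:ℝ)+1) ≠ 0 := by positivity
    field_simp
  have hsum2 : HasSum (fun n : ℕ => a * (((ascPochhammer ℝ n).eval a / n.factorial) * x ^ n))
      (deriv (binomSeries a).sum x - x * deriv (binomSeries a).sum x) := by
    refine (hd.sub hxd).congr_fun fun n => ?_
    rw [hkey n]
    simp only [hg]
    ring
  have := (hf.mul_left a).unique hsum2
  rw [this]
  ring

lemma binom_h_deriv {a : ℝ} (ha : 0 < a) {y : ℝ} (hy : |y| < 1) :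
    HasDerivAt (fun y => (binomSeries a).sum y * (1 - y) ^ a) 0 y := by
  have h1y : (0:ℝ) < 1 - y := by
    rcases abs_lt.mp hy with ⟨_, h2⟩; linarith
  have hf' : HasDerivAt (binomSeries a).sum (deriv (binomSeries a).sum y) y :=
    (binom_differentiableAt ha hy).hasDerivAt
  have hu : HasDerivAt (fun y : ℝ => 1 - y) (-1) y := by
    simpa using (hasDerivAt_id y).const_sub 1
  have hφ : HasDerivAt (fun y : ℝ => (1 - y) ^ a) (a * (1 - y) ^ (a - 1) * (-1)) y :=
    (Real.hasDerivAt_rpow_const (Or.inl (ne_of_gt h1y))).comp y hu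
  have hprod := hf'.mul hφ
  have hz : deriv (binomSeries a).sum y * (1 - y) ^ a
      + (binomSeries a).sum y * (a * (1 - y) ^ (a - 1) * (-1)) = 0 := by
    have hr : (1 - y) ^ a = (1 - y) ^ (a - 1) * (1 - y) := by
      rw [← Real.rpow_add_one (ne_of_gt h1y) (a-1)]
      norm_num
    rw [hr]
    have hode := binom_ode ha hy
    have expand : deriv (binomSeries a).sum y * ((1 - y) ^ (a-1) * (1 - y))
        + (binomSeries a).sum y * (a * (1 - y) ^ (a - 1) * (-1))
        = (1 - y) ^ (a-1) * ((1 - y) * deriv (binomSeries a).sum y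
            - a * (binomSeries a).sum y) := by ring
    rw [expand, hode, sub_self, mul_zero]
  rwa [hz] at hprod

lemma binom_sum_eq {a : ℝ} (ha : 0 < a) {x : ℝ} (hx : |x| < 1) :
    (binomSeries a).sum x = (1 - x) ^ (-a) := by
  set h : ℝ → ℝ := fun y => (binomSeries a).sum y * (1 - y) ^ a with hh
  have habs : ∀ y ∈ Set.Ioo (-1:ℝ) 1, |y| < 1 := fun y hy => abs_lt.mpr ⟨hy.1, hy.2⟩
  have hconst : h x = h 0 := by
    refine Convex.is_const_of_fderivWithin_eq_zero (𝕜 := ℝ) (convex_Ioo (-1:ℝ) 1)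
      (fun y hy => ((binom_h_deriv ha (habs y hy)).differentiableAt).differentiableWithinAt)
      (fun y hy => ?_) ⟨(abs_lt.mp hx).1, (abs_lt.mp hx).2⟩ (by norm_num)
    rw [fderivWithin_of_isOpen isOpen_Ioo hy, ← toSpanSingleton_deriv,
      (binom_h_deriv ha (habs y hy)).deriv]
    ext
    simp
  have hf0 : (binomSeries a).sum 0 = 1 := by
    have h1 := binom_hasSum ha (x := (0:ℝ)) (by norm_num)
    have h2 : HasSum (fun k : ℕ => ((ascPochhammer ℝ k).eval a / k.factorial) * (0:ℝ) ^ k)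
        (((ascPochhammer ℝ 0).eval a / (0:ℕ).factorial) * (0:ℝ) ^ 0) :=
      hasSum_single 0 (fun b hb => by simp [zero_pow hb])
    have := h1.unique h2
    simpa using this
  have h1x : (0:ℝ) < 1 - x := by rcases abs_lt.mp hx with ⟨_, h2⟩; linarith
  have hx1 : (binomSeries a).sum x * (1 - x) ^ a = 1 := by
    have : h x = 1 := by rw [hconst]; simp [hh, hf0]
    simpa [hh] using this
  have hne : (1 - x) ^ a ≠ 0 := ne_of_gt (Real.rpow_pos_of_pos h1x a)
  rw [Real.rpow_neg (le_of_lt h1x)]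
  field_simp at hx1 ⊢
  linarith [hx1]

lemma hasSum_binomial {a : ℝ} (ha : 0 < a) {x : ℝ} (hx : |x| < 1) :
    HasSum (fun k : ℕ => (ascPochhammer ℝ k).eval a * x ^ k / k.factorial)
      ((1 - x) ^ (-a)) := by
  have := binom_hasSum ha hx
  rw [binom_sum_eq ha hx] at this
  refine this.congr_fun fun k => ?_
  ring

lemma rpow_nat_inv_eq {t : ℝ} (ht : 0 < t) (k : ℕ) :
    t ^ (-(2*(k:ℝ))) = ((t^2)^k)⁻¹ := by
  rw [← pow_mul, ← Real.rpow_natCast t (2*k), ← Real.rpow_neg ht.le]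
  push_cast
  ring_nf

lemma student_pointwise {ν : ℝ} (hν : 0 < ν) {a : ℝ} (ha' : a = (ν+1)/2) {t : ℝ}
    (ht : Real.sqrt ν < t) :
    HasSum (fun k : ℕ => ν ^ a * ((ascPochhammer ℝ k).eval a * (-ν)^k / k.factorial)
        * t ^ (-(ν+1) - 2*(k:ℝ)))
      ((1 + t^2/ν) ^ (-a)) := by
  have ha : 0 < a := by rw [ha']; linarith
  have ht0 : 0 < t := lt_of_le_of_lt (Real.sqrt_nonneg ν) ht
  have hνt : ν < t^2 := (Real.sqrt_lt' ht0).mp ht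
  have ht2 : (0:ℝ) < t^2 := by positivity
  set x : ℝ := -ν / t^2 with hx'
  have hx : |x| < 1 := by
    rw [hx', abs_div, abs_neg, abs_of_pos hν, abs_of_pos ht2, div_lt_one ht2]
    exact hνt
  have hbin := hasSum_binomial ha hx
  have h1x : 1 - x = 1 + ν/t^2 := by rw [hx']; ring
  have hfac : (1:ℝ) + t^2/ν = (t^2/ν) * (1 + ν/t^2) := by
    field_simp
    ring
  have hmul := hbin.mul_left ((t^2/ν) ^ (-a))
  have hCsum : (t^2/ν) ^ (-a) * (1-x) ^ (-a) = (1 + t^2/ν) ^ (-a) := by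
    rw [h1x, hfac, Real.mul_rpow (by positivity) (by positivity)]
  rw [hCsum] at hmul
  refine hmul.congr_fun fun k => ?_
  -- coefficient identity
  have hC : (t^2/ν) ^ (-a) = ν^a * t ^ (-(ν+1)) := by
    rw [Real.div_rpow (by positivity) hν.le, ← Real.rpow_natCast t 2,
      ← Real.rpow_mul ht0.le, Real.rpow_neg hν.le, div_inv_eq_mul]
    have : ((2:ℕ):ℝ) * (-a) = -(ν+1) := by rw [ha']; push_cast; ring
    rw [this, mul_comm]
  have hxk : x ^ k = (-ν)^k * ((t^2)^k)⁻¹ := by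
    rw [hx', div_pow, div_eq_mul_inv]
  have hts : t ^ (-(ν+1) - 2*(k:ℝ)) = t ^ (-(ν+1)) * ((t^2)^k)⁻¹ := by
    rw [show -(ν+1) - 2*(k:ℝ) = -(ν+1) + (-(2*(k:ℝ))) by ring,
      Real.rpow_add ht0, rpow_nat_inv_eq ht0]
  rw [hC, hxk, hts]
  ring

lemma poch_shift (b : ℝ) (k : ℕ) :
    b * (ascPochhammer ℝ k).eval (b+1) = (ascPochhammer ℝ k).eval b * (b + k) := by
  have h1 : (ascPochhammer ℝ (k+1)).eval b = b * (ascPochhammer ℝ k).eval (b+1) := by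
    rw [ascPochhammer_succ_left]
    simp [Polynomial.eval_comp]
  rw [← h1, ascPochhammer_succ_eval]

lemma poch_ratio {b : ℝ} (hb : 0 < b) (k : ℕ) :
    (ascPochhammer ℝ k).eval b / (ascPochhammer ℝ k).eval (b+1) = b / (b + k) := by
  have hpb := ascPochhammer_pos k b hb
  have hpb1 := ascPochhammer_pos k (b+1) (by linarith)
  have hbk : (0:ℝ) < b + k := by positivity
  rw [div_eq_div_iff (ne_of_gt hpb1) (ne_of_gt hbk)]
  have := poch_shift b k
  linarith [poch_shift b k]


/-- The Gauss hypergeometric function `₂F₁(a,b;c;x)`, defined by its power series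
`∑ₖ (a)ₖ(b)ₖ/(c)ₖ · xᵏ/k!` (with `(a)ₖ` the Pochhammer symbol). -/
noncomputable def hyp2F1 (a b c x : ℝ) : ℝ :=
  ∑' k : ℕ,
    ((ascPochhammer ℝ k).eval a * (ascPochhammer ℝ k).eval b /
        (ascPochhammer ℝ k).eval c) * x ^ k / (Nat.factorial k)

theorem student_tail_hypergeometric
    (ν s : ℝ) (hν : 0 < ν) (hs : Real.sqrt ν < s) :
    (Real.Gamma ((ν + 1) / 2) / (Real.Gamma (ν / 2) * Real.sqrt (ν * Real.pi))) *
        ∫ t in Ioi s, (1 + t ^ 2 / ν) ^ (-((ν + 1) / 2)) =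
      (1 / (ν * Real.sqrt Real.pi)) * (ν / s ^ 2) ^ (ν / 2) *
        (Real.Gamma ((ν + 1) / 2) / Real.Gamma (ν / 2)) *
        hyp2F1 ((1 + ν) / 2) (ν / 2) (1 + ν / 2) (-ν / s ^ 2) := by
  have hs0 : 0 < s := lt_of_le_of_lt (Real.sqrt_nonneg ν) hs
  have hνs : ν < s ^ 2 := (Real.sqrt_lt' hs0).mp hs
  have hs2 : (0:ℝ) < s ^ 2 := by positivity
  set a : ℝ := (ν + 1) / 2 with ha'
  have ha : 0 < a := by rw [ha']; linarith
  set c : ℕ → ℝ := fun k => (ascPochhammer ℝ k).eval a * (-ν) ^ k / k.factorial with hc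
  set F : ℕ → ℝ → ℝ := fun k t => ν ^ a * c k * t ^ (-(ν+1) - 2*(k:ℝ)) with hF
  have hept : ∀ k : ℕ, (-(ν+1) - 2*(k:ℝ)) < -1 := by
    intro k
    have : (0:ℝ) ≤ k := Nat.cast_nonneg k
    linarith
  have hν2k : ∀ k : ℕ, (0:ℝ) < ν + 2*k := by
    intro k
    have : (0:ℝ) ≤ k := Nat.cast_nonneg k
    linarith
  have hint : ∀ k, IntegrableOn (fun t => F k t) (Ioi s) := fun k =>
    (integrableOn_Ioi_rpow_of_lt (hept k) hs0).const_mul _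
  have hIone : ∀ k : ℕ, ∫ t in Ioi s, t ^ (-(ν+1) - 2*(k:ℝ))
      = (s ^ (-ν) * ((s^2)^k)⁻¹) / (ν + 2*(k:ℝ)) := by
    intro k
    rw [integral_Ioi_rpow_of_lt (hept k) hs0]
    have h1 : -(ν+1) - 2*(k:ℝ) + 1 = -ν + -(2*(k:ℝ)) := by ring
    rw [h1, Real.rpow_add hs0, rpow_nat_inv_eq hs0]
    rw [show (-ν + -(2*(k:ℝ)) : ℝ) = -(ν + 2*(k:ℝ)) by ring, neg_div_neg_eq]
  -- the sum we will compare everything to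
  set u : ℕ → ℝ := fun k => (ascPochhammer ℝ k).eval a * (-ν/s^2) ^ k
      / (k.factorial * (ν + 2*(k:ℝ))) with hu
  have hIval : ∀ k : ℕ, ∫ t in Ioi s, F k t = (ν ^ a * s ^ (-ν)) * u k := by
    intro k
    rw [hF]
    simp only []
    rw [integral_const_mul, hIone, hu, hc]
    have hx : (-ν/s^2) ^ k = (-ν)^k * ((s^2)^k)⁻¹ := by
      rw [div_pow, div_eq_mul_inv]
    simp only []
    rw [hx]
    have hfk : (k.factorial : ℝ) ≠ 0 := by positivity
    field_simp
  have hnorm : ∀ k : ℕ, ∫ t in Ioi s, ‖F k t‖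
      = (ν ^ a * |c k|) * ((s ^ (-ν) * ((s^2)^k)⁻¹) / (ν + 2*(k:ℝ))) := by
    intro k
    have : ∀ t ∈ Ioi s, ‖F k t‖ = (ν ^ a * |c k|) * t ^ (-(ν+1) - 2*(k:ℝ)) := by
      intro t ht
      have ht0 : 0 < t := lt_trans hs0 ht
      rw [hF]
      simp only []
      rw [Real.norm_eq_abs, abs_mul, abs_mul,
        abs_of_pos (Real.rpow_pos_of_pos hν a),
        abs_of_nonneg (Real.rpow_nonneg ht0.le _)]
    rw [setIntegral_congr_fun measurableSet_Ioi this, integral_const_mul, hIone]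
  have hx2 : |(-ν/s^2 : ℝ)| < 1 := by
    rw [abs_div, abs_neg, abs_of_pos hν, abs_of_pos hs2, div_lt_one hs2]
    exact hνs
  have hx2' : |(ν/s^2 : ℝ)| < 1 := by
    rw [abs_div, abs_of_pos hν, abs_of_pos hs2, div_lt_one hs2]
    exact hνs
  have hsumnorm : Summable fun k => ∫ t in Ioi s, ‖F k t‖ := by
    have hg : Summable fun k : ℕ =>
        (ν ^ a * s ^ (-ν) / ν) * ((ascPochhammer ℝ k).eval a * (ν/s^2) ^ k / k.factorial) :=
      ((hasSum_binomial ha hx2').summable).mul_left _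
    refine Summable.of_nonneg_of_le (fun k => ?_) (fun k => ?_) hg
    · rw [hnorm k]
      have := hν2k k
      have h1 : (0:ℝ) ≤ ν ^ a * |c k| := by positivity
      have h2 : (0:ℝ) ≤ s ^ (-ν) * ((s^2)^k)⁻¹ := by positivity
      positivity
    · rw [hnorm k]
      have hck : |c k| = (ascPochhammer ℝ k).eval a * ν ^ k / k.factorial := by
        rw [hc]
        simp only []
        rw [abs_div, abs_mul, abs_pow, abs_neg, abs_of_pos hν,
          abs_of_pos (ascPochhammer_pos k a ha), abs_of_pos (by positivity : (0:ℝ) < (k.factorial:ℝ))]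
      rw [hck]
      have hxk : (ν/s^2) ^ k = ν^k * ((s^2)^k)⁻¹ := by rw [div_pow, div_eq_mul_inv]
      rw [hxk]
      have hP : (0:ℝ) ≤ ν ^ a * ((ascPochhammer ℝ k).eval a * ν ^ k / k.factorial)
          * (s ^ (-ν) * ((s^2)^k)⁻¹) := by
        have := ascPochhammer_pos k a ha
        positivity
      calc ν ^ a * ((ascPochhammer ℝ k).eval a * ν ^ k / k.factorial)
            * ((s ^ (-ν) * ((s^2)^k)⁻¹) / (ν + 2*(k:ℝ)))
          = (ν ^ a * ((ascPochhammer ℝ k).eval a * ν ^ k / k.factorial)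
            * (s ^ (-ν) * ((s^2)^k)⁻¹)) / (ν + 2*(k:ℝ)) := by ring
        _ ≤ (ν ^ a * ((ascPochhammer ℝ k).eval a * ν ^ k / k.factorial)
            * (s ^ (-ν) * ((s^2)^k)⁻¹)) / ν := by
            apply div_le_div_of_nonneg_left hP hν
            have : (0:ℝ) ≤ k := Nat.cast_nonneg k
            linarith
        _ = ν ^ a * s ^ (-ν) / ν * ((ascPochhammer ℝ k).eval a * (ν^k * ((s^2)^k)⁻¹) / k.factorial) := by
            ring
  have hIeq : (∫ t in Ioi s, (1 + t ^ 2 / ν) ^ (-a)) = (ν ^ a * s ^ (-ν)) * ∑' k, u k := by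
    rw [setIntegral_congr_fun measurableSet_Ioi
      (fun t ht => ((student_pointwise hν ha' (lt_trans hs ht)).tsum_eq).symm),
      ← MeasureTheory.integral_tsum_of_summable_integral_norm hint hsumnorm]
    rw [tsum_congr hIval, tsum_mul_left]
  have hhyp : hyp2F1 ((1 + ν) / 2) (ν / 2) (1 + ν / 2) (-ν / s ^ 2) = ν * ∑' k, u k := by
    rw [hyp2F1, ← tsum_mul_left]
    apply tsum_congr
    intro k
    have e1 : ((1 + ν) / 2 : ℝ) = a := by rw [ha']; ring
    have e2 : (1 + ν/2 : ℝ) = ν/2 + 1 := by ring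
    rw [e1, e2, hu]
    have hb : (0:ℝ) < ν/2 := by linarith
    have hr : (ascPochhammer ℝ k).eval (ν/2) / (ascPochhammer ℝ k).eval (ν/2 + 1)
        = ν / (ν + 2*(k:ℝ)) := by
      rw [poch_ratio hb k, div_eq_div_iff (by linarith) (ne_of_gt (hν2k k))]
      ring
    have hterm : (ascPochhammer ℝ k).eval a * (ascPochhammer ℝ k).eval (ν/2)
          / (ascPochhammer ℝ k).eval (ν/2 + 1) * (-ν/s^2) ^ k / (k.factorial : ℝ)
        = (ascPochhammer ℝ k).eval a * (-ν/s^2) ^ k / (k.factorial : ℝ)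
          * ((ascPochhammer ℝ k).eval (ν/2) / (ascPochhammer ℝ k).eval (ν/2 + 1)) := by
      ring
    rw [hterm, hr]
    have hfk : (k.factorial : ℝ) ≠ 0 := by positivity
    have hnk := ne_of_gt (hν2k k)
    field_simp
  rw [hIeq, hhyp]
  -- final scalar identity
  have hsqrt : Real.sqrt (ν * Real.pi) = Real.sqrt ν * Real.sqrt Real.pi :=
    Real.sqrt_mul hν.le _
  have hνa : ν ^ a = ν ^ (ν/2 : ℝ) * Real.sqrt ν := by
    rw [Real.sqrt_eq_rpow, ← Real.rpow_add hν, ha']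
    rw [show (ν+1)/2 = ν/2 + 1/(2:ℝ) by ring]
  have hP : (ν / s^2) ^ (ν/2 : ℝ) = ν ^ (ν/2 : ℝ) * (s ^ (ν : ℝ))⁻¹ := by
    rw [Real.div_rpow hν.le (sq_nonneg s), ← Real.rpow_natCast s 2, ← Real.rpow_mul hs0.le]
    rw [show ((2:ℕ):ℝ) * (ν/2) = ν by push_cast; ring, div_eq_mul_inv]
  have hsν : s ^ (-ν) = (s ^ (ν:ℝ))⁻¹ := by
    rw [Real.rpow_neg hs0.le]
  have hsqν : Real.sqrt ν ≠ 0 := ne_of_gt (Real.sqrt_pos.mpr hν)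
  have hsqπ : Real.sqrt Real.pi ≠ 0 := ne_of_gt (Real.sqrt_pos.mpr Real.pi_pos)
  have hΓb : Real.Gamma (ν/2) ≠ 0 := ne_of_gt (Real.Gamma_pos_of_pos (by linarith))
  have hsνne : (s ^ (ν:ℝ)) ≠ 0 := ne_of_gt (Real.rpow_pos_of_pos hs0 ν)
  rw [hsqrt, hνa, hP, hsν]
  field_simp
end

section
/- Let n ≥ 1 be an integer and ν > 1. Then for every q ∈ ℝ, ∫_{q²}^∞ (u - q²)^{(n-1)/2} (1 + u/ν)^{-(n+ν)/2} du = ν^{(n+ν)/2} · (q² + ν)^{-(ν-1)/2} · Γ((ν-1)/2)·Γ((n+1)/2)/Γ((n+ν)/2). -/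
open MeasureTheory Set

lemma real_beta_aux (a b : ℝ) (ha : 0 < a) (hb : 0 < b) :
    ∫ x in (0:ℝ)..1, x ^ (a - 1) * (1 - x) ^ (b - 1) =
      Real.Gamma a * Real.Gamma b / Real.Gamma (a + b) := by
  have hC := Complex.Gamma_mul_Gamma_eq_betaIntegral (s := (a : ℂ)) (t := (b : ℂ))
    (by simpa using ha) (by simpa using hb)
  have hbeta : Complex.betaIntegral (a : ℂ) (b : ℂ) =
      ((∫ x in (0:ℝ)..1, x ^ (a - 1) * (1 - x) ^ (b - 1) : ℝ) : ℂ) := by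
    rw [Complex.betaIntegral, ← intervalIntegral.integral_ofReal,
      intervalIntegral.integral_of_le zero_le_one,
      intervalIntegral.integral_of_le zero_le_one]
    refine setIntegral_congr_fun measurableSet_Ioc fun x hx => ?_
    have hx0 : (0:ℝ) ≤ x := hx.1.le
    have hx1 : (0:ℝ) ≤ 1 - x := by linarith [hx.2]
    rw [Complex.ofReal_mul, Complex.ofReal_cpow hx0, Complex.ofReal_cpow hx1]
    push_cast
    ring
  rw [hbeta, ← Complex.ofReal_add, Complex.Gamma_ofReal, Complex.Gamma_ofReal,
    Complex.Gamma_ofReal] at hC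
  have hG : Real.Gamma (a + b) ≠ 0 := (Real.Gamma_pos_of_pos (by linarith)).ne'
  have hC' : Real.Gamma a * Real.Gamma b =
      Real.Gamma (a + b) * ∫ x in (0:ℝ)..1, x ^ (a - 1) * (1 - x) ^ (b - 1) := by
    exact_mod_cast hC
  field_simp [hC']
  rw [hC']; ring

lemma beta_Ioi_aux (a b : ℝ) (ha : 0 < a) (hb : 0 < b) :
    ∫ s in Ioi (0:ℝ), s ^ (a - 1) * (1 + s) ^ (-(a + b)) =
      Real.Gamma a * Real.Gamma b / Real.Gamma (a + b) := by
  set f : ℝ → ℝ := fun s => s / (1 + s) with hf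
  have hderiv : ∀ s ∈ Ioi (0:ℝ), HasDerivWithinAt f (((1 + s) ^ 2)⁻¹) (Ioi 0) s := by
    intro s hs
    have h1 : (0:ℝ) < 1 + s := by simp at hs; linarith
    have : HasDerivAt f ((1 * (1 + s) - s * 1) / (1 + s) ^ 2) s :=
      (hasDerivAt_id s).div ((hasDerivAt_id s).const_add 1) h1.ne'
    rw [show ((1 + s) ^ 2)⁻¹ = (1 * (1 + s) - s * 1) / (1 + s) ^ 2 by ring]
    exact this.hasDerivWithinAt
  have hinj : InjOn f (Ioi 0) := by
    intro s hs t ht h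
    simp only [mem_Ioi] at hs ht
    have h1 : (0:ℝ) < 1 + s := by linarith
    have h2 : (0:ℝ) < 1 + t := by linarith
    simp only [hf] at h
    field_simp at h
    linarith
  have himg : f '' Ioi 0 = Ioo (0:ℝ) 1 := by
    ext x
    constructor
    · rintro ⟨s, hs, rfl⟩
      simp only [mem_Ioi] at hs
      have h1 : (0:ℝ) < 1 + s := by linarith
      exact ⟨div_pos hs h1, (div_lt_one h1).2 (by linarith)⟩
    · rintro ⟨hx0, hx1⟩
      have hx1' : (0:ℝ) < 1 - x := by linarith
      refine ⟨x / (1 - x), div_pos hx0 hx1', ?_⟩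
      show x / (1 - x) / (1 + x / (1 - x)) = x
      have h2 : 1 + x / (1 - x) = 1 / (1 - x) := by field_simp; ring
      rw [h2]
      field_simp
  have key : ∫ x in Ioo (0:ℝ) 1, x ^ (a - 1) * (1 - x) ^ (b - 1) =
      ∫ s in Ioi (0:ℝ), |((1 + s) ^ 2)⁻¹| • ((f s) ^ (a - 1) * (1 - f s) ^ (b - 1)) := by
    rw [← himg]
    exact integral_image_eq_integral_abs_deriv_smul measurableSet_Ioi hderiv hinj _
  have hpt : ∀ s ∈ Ioi (0:ℝ),
      |((1 + s) ^ 2)⁻¹| • ((f s) ^ (a - 1) * (1 - f s) ^ (b - 1)) =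
        s ^ (a - 1) * (1 + s) ^ (-(a + b)) := by
    intro s hs
    simp only [mem_Ioi] at hs
    have h1 : (0:ℝ) < 1 + s := by linarith
    have h2 : (1:ℝ) - f s = (1 + s)⁻¹ := by
      simp only [hf]; rw [one_sub_div h1.ne', add_sub_cancel_right, one_div]
    have h3 : f s ^ (a - 1) = s ^ (a - 1) * ((1 + s) ^ (a - 1))⁻¹ := by
      rw [hf]
      rw [Real.div_rpow hs.le h1.le, div_eq_mul_inv]
    have h4 : ((1 + s)⁻¹ : ℝ) ^ (b - 1) = ((1 + s) ^ (b - 1))⁻¹ := Real.inv_rpow h1.le _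
    have h5 : (1 + s) ^ (-(a + b)) = ((1 + s) ^ (a + b))⁻¹ := Real.rpow_neg h1.le _
    have h6 : (1 + s) ^ (a + b) = (1 + s) ^ (2:ℕ) * ((1 + s) ^ (a - 1) * (1 + s) ^ (b - 1)) := by
      rw [← Real.rpow_natCast (1 + s) 2, ← Real.rpow_add h1, ← Real.rpow_add h1]
      congr 1
      push_cast
      ring
    rw [smul_eq_mul, h2, h3, h4, h5, h6, abs_of_pos (by positivity)]
    rw [mul_inv, mul_inv]
    ring
  rw [← setIntegral_congr_fun measurableSet_Ioi hpt, ← key, ← integral_Ioc_eq_integral_Ioo,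
    ← intervalIntegral.integral_of_le zero_le_one]
  exact real_beta_aux a b ha hb

theorem student_ES_integral_beta
    (n : ℕ) (hn : 1 ≤ n) (ν : ℝ) (hν : 1 < ν) (q : ℝ) :
    ∫ u in Ioi (q ^ 2),
        (u - q ^ 2) ^ (((n : ℝ) - 1) / 2) * (1 + u / ν) ^ (-(((n : ℝ) + ν) / 2)) =
      ν ^ (((n : ℝ) + ν) / 2) * (q ^ 2 + ν) ^ (-((ν - 1) / 2)) *
        (Real.Gamma ((ν - 1) / 2) * Real.Gamma (((n : ℝ) + 1) / 2) /
          Real.Gamma (((n : ℝ) + ν) / 2)) := by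
  have hν0 : (0:ℝ) < ν := by linarith
  set α : ℝ := q ^ 2 + ν with hα_def
  have hα : 0 < α := by positivity
  set p : ℝ := ((n : ℝ) - 1) / 2 with hp
  set m : ℝ := ((n : ℝ) + ν) / 2 with hm
  set f : ℝ → ℝ := fun s => α * s + q ^ 2 with hf
  have hderiv : ∀ s ∈ Ioi (0:ℝ), HasDerivWithinAt f α (Ioi 0) s := by
    intro s _
    have : HasDerivAt f (α * 1) s := ((hasDerivAt_id s).const_mul α).add_const _
    simpa using this.hasDerivWithinAt
  have hinj : InjOn f (Ioi 0) := by
    intro s _ t _ h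
    simp only [hf, add_left_inj] at h
    exact mul_left_cancel₀ hα.ne' h
  have himg : f '' Ioi 0 = Ioi (q ^ 2) := by
    ext u
    constructor
    · rintro ⟨s, hs, rfl⟩
      simp only [mem_Ioi] at hs ⊢
      have := mul_pos hα hs
      show q ^ 2 < α * s + q ^ 2
      linarith
    · intro hu
      simp only [mem_Ioi] at hu
      refine ⟨(u - q ^ 2) / α, div_pos (by linarith) hα, ?_⟩
      show α * ((u - q ^ 2) / α) + q ^ 2 = u
      field_simp
      ring
  have key : ∫ u in Ioi (q ^ 2), (u - q ^ 2) ^ p * (1 + u / ν) ^ (-m) =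
      ∫ s in Ioi (0:ℝ), |α| • ((f s - q ^ 2) ^ p * (1 + f s / ν) ^ (-m)) := by
    rw [← himg]
    exact integral_image_eq_integral_abs_deriv_smul measurableSet_Ioi hderiv hinj _
  have hpt : ∀ s ∈ Ioi (0:ℝ),
      |α| • ((f s - q ^ 2) ^ p * (1 + f s / ν) ^ (-m)) =
        (α ^ (p + 1) * (α / ν) ^ (-m)) * (s ^ p * (1 + s) ^ (-m)) := by
    intro s hs
    simp only [mem_Ioi] at hs
    have h1 : (0:ℝ) < 1 + s := by linarith
    have hfs : f s - q ^ 2 = α * s := by simp [hf]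
    have hfr : 1 + f s / ν = (α / ν) * (1 + s) := by
      simp only [hf, hα_def]
      field_simp
      ring
    rw [smul_eq_mul, hfs, hfr, Real.mul_rpow hα.le hs.le,
      Real.mul_rpow (by positivity) h1.le, abs_of_pos hα,
      Real.rpow_add hα p 1, Real.rpow_one]
    ring
  rw [key, setIntegral_congr_fun measurableSet_Ioi hpt, integral_const_mul]
  have hbeta := beta_Ioi_aux (((n : ℝ) + 1) / 2) ((ν - 1) / 2)
    (by positivity) (by linarith)
  have e1 : ((n : ℝ) + 1) / 2 - 1 = p := by rw [hp]; ring
  have e2 : ((n : ℝ) + 1) / 2 + (ν - 1) / 2 = m := by rw [hm]; ring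
  rw [e1, e2] at hbeta
  rw [hbeta]
  have hconst : α ^ (p + 1) * (α / ν) ^ (-m) = ν ^ m * α ^ (-((ν - 1) / 2)) := by
    rw [Real.div_rpow hα.le hν0.le, Real.rpow_neg hν0.le, div_eq_mul_inv, inv_inv]
    have hexp : p + 1 + -m = -((ν - 1) / 2) := by rw [hp, hm]; ring
    rw [← mul_assoc, ← Real.rpow_add hα, hexp, mul_comm]
  rw [hconst]
  ring
end

section
/- Let n ≥ 2, let Σ be a symmetric positive definite real n×n matrix, μ ∈ ℝⁿ, δ ∈ ℝⁿ with δ ≠ 0, θ ∈ ℝ, and let g be a nonnegative measurable function on [0,∞) with f(x) = det(Σ)^{-1/2} g((x-μ)ᵀΣ^{-1}(x-μ)) integrable. Then for every v ∈ ℝ, ∫_{{x : δ·x + θ ≤ -v}} f(x) dx = G[g]((δ·μ + θ + v)/√(δΣδᵀ)). In particular, if q solves G[g](q) = α, then the Value-at-Risk at confidence 1-α of the Delta-Theta approximated profit-and-loss ΔΠ = δ·r + θ, where r has density f, is VaR_α = -δ·μ - θ + q·√(δΣδᵀ). -/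
open MeasureTheory Matrix Set

section Aux


lemma integral_comp_affine {ι : Type*} [Fintype ι] [DecidableEq ι]
    (M : Matrix ι ι ℝ) (hM : M.det ≠ 0) (b : ι → ℝ) (F : (ι → ℝ) → ℝ) :
    ∫ x, F x = |M.det| * ∫ y, F (b + M.mulVec y) := by
  have h1 : ∫ x, F x = ∫ x, F (b + x) := (integral_add_left_eq_self b (f := F)).symm
  have hinv : Invertible M := M.invertibleOfIsUnitDet (isUnit_iff_ne_zero.2 hM)
  have hemb : MeasurableEmbedding (Matrix.toLin' M) := by
    have := ((M.toLinearEquiv' hinv).toContinuousLinearEquiv.toHomeomorph).measurableEmbedding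
    convert this using 1
    rfl
  have hmap := Real.map_matrix_volume_pi_eq_smul_volume_pi hM
  have hvol : (volume : Measure (ι → ℝ)) =
      ENNReal.ofReal |M.det| • Measure.map (Matrix.toLin' M) volume := by
    rw [hmap, smul_smul, ← ENNReal.ofReal_mul (abs_nonneg _), ← abs_mul,
      mul_inv_cancel₀ hM, abs_one, ENNReal.ofReal_one, one_smul]
  rw [h1]
  calc ∫ x, F (b + x) ∂volume
      = ∫ x, F (b + x) ∂(ENNReal.ofReal |M.det| • Measure.map (Matrix.toLin' M) volume) := by
        rw [← hvol]
    _ = |M.det| * ∫ x, F (b + x) ∂(Measure.map (Matrix.toLin' M) volume) := by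
        rw [integral_smul_measure, ENNReal.toReal_ofReal (abs_nonneg _), smul_eq_mul]
    _ = |M.det| * ∫ y, F (b + M.mulVec y) := by
        rw [hemb.integral_map]
        simp [Matrix.toLin'_apply]


lemma integrable_comp_affine {ι : Type*} [Fintype ι] [DecidableEq ι]
    {M : Matrix ι ι ℝ} (hM : M.det ≠ 0) (b : ι → ℝ) {F : (ι → ℝ) → ℝ}
    (hF : Integrable F) : Integrable (fun y => F (b + M.mulVec y)) := by
  have hinv : Invertible M := M.invertibleOfIsUnitDet (isUnit_iff_ne_zero.2 hM)
  have hemb : MeasurableEmbedding (Matrix.toLin' M) := by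
    have := ((M.toLinearEquiv' hinv).toContinuousLinearEquiv.toHomeomorph).measurableEmbedding
    convert this using 1
    rfl
  have hmap := Real.map_matrix_volume_pi_eq_smul_volume_pi hM
  have hvol : (volume : Measure (ι → ℝ)) =
      ENNReal.ofReal |M.det| • Measure.map (Matrix.toLin' M) volume := by
    rw [hmap, smul_smul, ← ENNReal.ofReal_mul (abs_nonneg _), ← abs_mul,
      mul_inv_cancel₀ hM, abs_one, ENNReal.ofReal_one, one_smul]
  have h1 : Integrable (fun x : ι → ℝ => F (b + x)) := by
    have hmp : MeasurePreserving (fun x : ι → ℝ => b + x) volume volume :=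
      measurePreserving_add_left volume b
    exact (hmp.integrable_comp_emb (MeasurableEquiv.addLeft b).measurableEmbedding).2 hF
  have h2 : Integrable (fun x : ι → ℝ => F (b + x)) (Measure.map (Matrix.toLin' M) volume) := by
    rw [hvol] at h1
    exact ((integrable_smul_measure (by simp [abs_pos.2 hM, hM]) (by simp)).1 h1)
  have h3 := (hemb.integrable_map_iff).1 h2
  refine h3.congr (Filter.Eventually.of_forall fun y => ?_)
  simp [Function.comp, Matrix.toLin'_apply]


section Rotate
variable {k : ℕ}

lemma integral_rotate {k : ℕ} (w : EuclideanSpace ℝ (Fin k)) (hw : w ≠ 0) (i : Fin k)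
    (Φ : ℝ → ℝ → ℝ) :
    ∫ y : EuclideanSpace ℝ (Fin k), Φ (inner ℝ w y) ‖y‖ =
      ∫ y : EuclideanSpace ℝ (Fin k), Φ (‖w‖ * y i) ‖y‖ := by
  have hwn : ‖w‖ ≠ 0 := norm_ne_zero_iff.2 hw
  set u : EuclideanSpace ℝ (Fin k) := ‖w‖⁻¹ • w with hu_def
  have hu : ‖u‖ = 1 := by
    rw [hu_def, norm_smul, norm_inv, norm_norm, inv_mul_cancel₀ hwn]
  set u₀ : EuclideanSpace ℝ (Fin k) := EuclideanSpace.single i (1:ℝ) with hu0_def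
  have hu0 : ‖u₀‖ = 1 := by simp [hu0_def]
  set R := Submodule.reflection (ℝ ∙ (u₀ - u))ᗮ with hR_def
  have hR : R u₀ = u := Submodule.reflection_sub (by rw [hu, hu0])
  have hw_eq : w = ‖w‖ • u := by rw [hu_def, smul_smul, mul_inv_cancel₀ hwn, one_smul]
  have key := (R.measurePreserving).integral_comp R.toHomeomorph.measurableEmbedding
      (fun y : EuclideanSpace ℝ (Fin k) => Φ (inner ℝ w y) ‖y‖)
  rw [← key]
  congr 1
  funext y
  have h1 : (inner ℝ w (R y) : ℝ) = ‖w‖ * y i := by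
    calc (inner ℝ w (R y) : ℝ) = ‖w‖ * inner ℝ u (R y) := by
          nth_rewrite 1 [hw_eq]; rw [real_inner_smul_left]
      _ = ‖w‖ * inner ℝ (R u₀) (R y) := by rw [hR]
      _ = ‖w‖ * inner ℝ u₀ y := by rw [R.inner_map_map]
      _ = ‖w‖ * y i := by
          congr 1
          simp [hu0_def, EuclideanSpace.single_apply, EuclideanSpace.inner_single_left]
  rw [h1, R.norm_map]

/-- transport between the pi space and `EuclideanSpace`. -/
lemma pi_euclid_facts (w : Fin k → ℝ) :
    ∀ x : EuclideanSpace ℝ (Fin k),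
      w ⬝ᵥ ((MeasurableEquiv.toLp 2 (Fin k → ℝ)).symm x) = (inner ℝ ((WithLp.equiv 2 (Fin k → ℝ)).symm w) x : ℝ)
      ∧ (∑ j, ((MeasurableEquiv.toLp 2 (Fin k → ℝ)).symm x) j ^ 2) = ‖x‖ ^ 2 := by
  intro x
  constructor
  · simp only [PiLp.inner_apply, RCLike.inner_apply, conj_trivial, dotProduct,
      MeasurableEquiv.coe_toLp_symm, WithLp.equiv_apply, WithLp.equiv_symm_apply, PiLp.toLp_apply]
    exact Finset.sum_congr rfl fun i _ => mul_comm _ _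
  · rw [EuclideanSpace.norm_eq, Real.sq_sqrt (by positivity)]
    simp only [Real.norm_eq_abs, sq_abs, MeasurableEquiv.coe_toLp_symm,
      WithLp.equiv_apply]

lemma norm_withLp_eq (w : Fin k → ℝ) :
    ‖(WithLp.equiv 2 (Fin k → ℝ)).symm w‖ = Real.sqrt (w ⬝ᵥ w) := by
  rw [EuclideanSpace.norm_eq]
  congr 1
  simp [dotProduct, WithLp.equiv_symm_apply, PiLp.toLp_apply, sq]

lemma integral_rotate_pi (w : Fin k → ℝ) (hw : w ≠ 0) (i : Fin k) (Φ : ℝ → ℝ → ℝ) :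
    ∫ y : Fin k → ℝ, Φ (w ⬝ᵥ y) (∑ j, y j ^ 2)
      = ∫ y : Fin k → ℝ, Φ (Real.sqrt (w ⬝ᵥ w) * y i) (∑ j, y j ^ 2) := by
  set wE : EuclideanSpace ℝ (Fin k) := (WithLp.equiv 2 (Fin k → ℝ)).symm w with hwE_def
  have hwE : wE ≠ 0 := by
    intro h
    apply hw
    funext j
    have := congrFun (congrArg (WithLp.equiv 2 (Fin k → ℝ)) h) j
    simpa [hwE_def] using this
  have hmp := EuclideanSpace.volume_preserving_symm_measurableEquiv_toLp (Fin k)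
  have e := (MeasurableEquiv.toLp 2 (Fin k → ℝ)).symm
  rw [← hmp.integral_comp (MeasurableEquiv.measurableEmbedding _)
    (fun y : Fin k → ℝ => Φ (w ⬝ᵥ y) (∑ j, y j ^ 2)),
    ← hmp.integral_comp (MeasurableEquiv.measurableEmbedding _)
    (fun y : Fin k → ℝ => Φ (Real.sqrt (w ⬝ᵥ w) * y i) (∑ j, y j ^ 2))]
  have h1 : ∀ x : EuclideanSpace ℝ (Fin k),
      Φ (w ⬝ᵥ ((MeasurableEquiv.toLp 2 (Fin k → ℝ)).symm x)) (∑ j, ((MeasurableEquiv.toLp 2 (Fin k → ℝ)).symm x) j ^ 2)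
        = (fun a b => Φ a (b ^ 2)) (inner ℝ wE x : ℝ) ‖x‖ := by
    intro x
    obtain ⟨ha, hb⟩ := pi_euclid_facts w x
    simp only [ha, hb]
    rfl
  have h2 : ∀ x : EuclideanSpace ℝ (Fin k),
      Φ (Real.sqrt (w ⬝ᵥ w) * ((MeasurableEquiv.toLp 2 (Fin k → ℝ)).symm x) i)
          (∑ j, ((MeasurableEquiv.toLp 2 (Fin k → ℝ)).symm x) j ^ 2)
        = (fun a b => Φ a (b ^ 2)) (‖wE‖ * x i) ‖x‖ := by
    intro x
    have hb2 : (∑ j, x j ^ 2) = ‖x‖ ^ 2 := by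
      rw [EuclideanSpace.norm_eq, Real.sq_sqrt (by positivity)]
      simp [Real.norm_eq_abs, sq_abs]
    simp only [MeasurableEquiv.coe_toLp_symm, WithLp.equiv_apply, hb2]
    rw [hwE_def, norm_withLp_eq]
  rw [integral_congr_ae (Filter.Eventually.of_forall h1),
    integral_congr_ae (Filter.Eventually.of_forall h2)]
  exact integral_rotate wE hwE i (fun a b => Φ a (b ^ 2))

lemma integrable_rotate_pi (w : Fin k → ℝ) (hw : w ≠ 0) (i : Fin k) (Φ : ℝ → ℝ → ℝ)
    (h : Integrable (fun y : Fin k → ℝ => Φ (w ⬝ᵥ y) (∑ j, y j ^ 2))) :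
    Integrable (fun y : Fin k → ℝ => Φ (Real.sqrt (w ⬝ᵥ w) * y i) (∑ j, y j ^ 2)) := by
  set wE : EuclideanSpace ℝ (Fin k) := (WithLp.equiv 2 (Fin k → ℝ)).symm w with hwE_def
  have hwE : wE ≠ 0 := by
    intro hh
    apply hw
    funext j
    have := congrFun (congrArg (WithLp.equiv 2 (Fin k → ℝ)) hh) j
    simpa [hwE_def] using this
  have hwn : ‖wE‖ ≠ 0 := norm_ne_zero_iff.2 hwE
  have hmp := EuclideanSpace.volume_preserving_symm_measurableEquiv_toLp (Fin k)
  -- move h to EuclideanSpace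
  have hE : Integrable (fun x : EuclideanSpace ℝ (Fin k) =>
      (fun a b => Φ a (b ^ 2)) (inner ℝ wE x : ℝ) ‖x‖) := by
    have := (hmp.integrable_comp_emb (MeasurableEquiv.measurableEmbedding _)).2 h
    refine this.congr (Filter.Eventually.of_forall fun x => ?_)
    obtain ⟨ha, hb⟩ := pi_euclid_facts w x
    simp only [Function.comp]
    simp only [ha, hb]
    rfl
  -- rotate
  set u : EuclideanSpace ℝ (Fin k) := ‖wE‖⁻¹ • wE with hu_def
  have hu : ‖u‖ = 1 := by rw [hu_def, norm_smul, norm_inv, norm_norm, inv_mul_cancel₀ hwn]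
  set u₀ : EuclideanSpace ℝ (Fin k) := EuclideanSpace.single i (1:ℝ) with hu0_def
  have hu0 : ‖u₀‖ = 1 := by simp [hu0_def]
  set R := Submodule.reflection (ℝ ∙ (u₀ - u))ᗮ with hR_def
  have hR : R u₀ = u := Submodule.reflection_sub (by rw [hu, hu0])
  have hw_eq : wE = ‖wE‖ • u := by rw [hu_def, smul_smul, mul_inv_cancel₀ hwn, one_smul]
  have hrot : Integrable (fun y : EuclideanSpace ℝ (Fin k) =>
      (fun a b => Φ a (b ^ 2)) ((inner ℝ wE (R y) : ℝ)) ‖R y‖) := by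
    exact (R.measurePreserving.integrable_comp_emb
      R.toHomeomorph.measurableEmbedding).2 hE
  have hpt : ∀ y : EuclideanSpace ℝ (Fin k),
      (fun a b => Φ a (b ^ 2)) ((inner ℝ wE (R y) : ℝ)) ‖R y‖
        = (fun a b => Φ a (b ^ 2)) (‖wE‖ * y i) ‖y‖ := by
    intro y
    have h1 : (inner ℝ wE (R y) : ℝ) = ‖wE‖ * y i := by
      calc (inner ℝ wE (R y) : ℝ) = ‖wE‖ * inner ℝ u (R y) := by
            nth_rewrite 1 [hw_eq]; rw [real_inner_smul_left]
        _ = ‖wE‖ * inner ℝ (R u₀) (R y) := by rw [hR]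
        _ = ‖wE‖ * inner ℝ u₀ y := by rw [R.inner_map_map]
        _ = ‖wE‖ * y i := by
            congr 1
            simp [hu0_def, EuclideanSpace.single_apply, EuclideanSpace.inner_single_left]
    rw [h1, R.norm_map]
  have hEr : Integrable (fun y : EuclideanSpace ℝ (Fin k) =>
      (fun a b => Φ a (b ^ 2)) (‖wE‖ * y i) ‖y‖) :=
    hrot.congr (Filter.Eventually.of_forall hpt)
  -- back to pi space
  have := (hmp.symm ((MeasurableEquiv.toLp 2 (Fin k → ℝ)).symm)).integrable_comp_emb
    ((MeasurableEquiv.toLp 2 (Fin k → ℝ)).symm).symm.measurableEmbedding |>.2 hEr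
  refine this.congr (Filter.Eventually.of_forall fun y => ?_)
  simp only [Function.comp]
  obtain ⟨_, hb⟩ := pi_euclid_facts w (((MeasurableEquiv.toLp 2 (Fin k → ℝ)).symm).symm y)
  have hxy : ((MeasurableEquiv.toLp 2 (Fin k → ℝ)).symm)
      (((MeasurableEquiv.toLp 2 (Fin k → ℝ)).symm).symm y) = y := by simp
  rw [hxy] at hb
  rw [← hb]
  have : ‖wE‖ = Real.sqrt (w ⬝ᵥ w) := by rw [hwE_def, norm_withLp_eq]
  rw [this]
  simp only [MeasurableEquiv.symm_symm, MeasurableEquiv.coe_toLp, WithLp.equiv_symm_apply,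
    PiLp.toLp_apply]
end Rotate


lemma polar_step {m : ℕ} (hm : 1 ≤ m) (g : ℝ → ℝ) (t : ℝ)
    (hint : Integrable (fun y : Fin (m+1) → ℝ =>
      indicator {y : Fin (m+1) → ℝ | y (Fin.last m) ≤ t} (fun y => g (∑ i, y i ^ 2)) y)) :
    ∫ y : Fin (m+1) → ℝ,
        indicator {y : Fin (m+1) → ℝ | y (Fin.last m) ≤ t} (fun y => g (∑ i, y i ^ 2)) y
      = (2 * Real.pi ^ ((m:ℝ)/2) / Real.Gamma ((m:ℝ)/2)) *
          ∫ r in Ioi (0:ℝ), r ^ ((m:ℝ)-1) * ∫ z in Iio t, g (z ^ 2 + r ^ 2) := by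
  haveI : Nonempty (Fin m) := Fin.pos_iff_nonempty.mp (by omega)
  set F : (Fin (m+1) → ℝ) → ℝ :=
    fun y => indicator {y : Fin (m+1) → ℝ | y (Fin.last m) ≤ t} (fun y => g (∑ i, y i ^ 2)) y
    with hF_def
  set G : ℝ × (Fin m → ℝ) → ℝ :=
    fun p => indicator {p : ℝ × (Fin m → ℝ) | p.1 ≤ t} (fun p => g (p.1 ^ 2 + ∑ j, p.2 j ^ 2)) p
    with hG_def
  set e := MeasurableEquiv.piFinSuccAbove (fun _ : Fin (m+1) => ℝ) (Fin.last m) with he_def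
  have hmp := MeasureTheory.volume_preserving_piFinSuccAbove (fun _ : Fin (m+1) => ℝ) (Fin.last m)
  have hpt : ∀ p : ℝ × (Fin m → ℝ), F (e.symm p) = G p := by
    rintro ⟨z, u⟩
    have hes : e.symm (z, u) = Fin.insertNth (Fin.last m) z u := rfl
    rw [hes]
    simp only [hF_def, hG_def, indicator_apply, mem_setOf_eq, Fin.insertNth_apply_same]
    congr 1
    rw [Fin.sum_univ_succAbove (fun i => (Fin.insertNth (α := fun _ : Fin (m+1) => ℝ) (Fin.last m) z u i) ^ 2) (Fin.last m)]
    simp [Fin.insertNth_apply_same, Fin.insertNth_apply_succAbove]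
  -- step 1: pass to the product
  have h1 : ∫ y, F y = ∫ p : ℝ × (Fin m → ℝ), G p := by
    rw [← (hmp.symm e).integral_comp e.symm.measurableEmbedding F]
    exact integral_congr_ae (Filter.Eventually.of_forall hpt)
  have hG_int : Integrable G := by
    have := ((hmp.symm e).integrable_comp_emb e.symm.measurableEmbedding).2 hint
    exact this.congr (Filter.Eventually.of_forall hpt)
  -- step 2: Fubini
  have h2 : ∫ p : ℝ × (Fin m → ℝ), G p
      = ∫ u : Fin m → ℝ, ∫ z : ℝ, G (z, u) := by
    rw [Measure.volume_eq_prod]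
    exact integral_prod_symm G (by rwa [← Measure.volume_eq_prod])
  -- step 3: inner integral
  have h3 : ∀ u : Fin m → ℝ, ∫ z : ℝ, G (z, u) = ∫ z in Iio t, g (z ^ 2 + ∑ j, u j ^ 2) := by
    intro u
    have : (fun z : ℝ => G (z, u))
        = indicator (Iic t) (fun z : ℝ => g (z ^ 2 + ∑ j, u j ^ 2)) := by
      funext z
      simp [hG_def, indicator_apply, mem_setOf_eq, Set.mem_Iic]
    rw [this, integral_indicator measurableSet_Iic, integral_Iic_eq_integral_Iio]
  -- step 4: pass to EuclideanSpace and polar coordinates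
  set K : ℝ → ℝ := fun r => ∫ z in Iio t, g (z ^ 2 + r ^ 2) with hK_def
  have h4 : ∫ u : Fin m → ℝ, ∫ z in Iio t, g (z ^ 2 + ∑ j, u j ^ 2)
      = ∫ x : EuclideanSpace ℝ (Fin m), K ‖x‖ := by
    rw [← (EuclideanSpace.volume_preserving_symm_measurableEquiv_toLp (Fin m)).integral_comp
      (MeasurableEquiv.measurableEmbedding _) (fun u => ∫ z in Iio t, g (z ^ 2 + ∑ j, u j ^ 2))]
    refine integral_congr_ae (Filter.Eventually.of_forall fun x => ?_)
    have hsum : (∑ j, ((MeasurableEquiv.toLp 2 (Fin m → ℝ)).symm x) j ^ 2) = ‖x‖ ^ 2 := by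
      rw [EuclideanSpace.norm_eq, Real.sq_sqrt (by positivity)]
      simp only [Real.norm_eq_abs, sq_abs]
      rfl
    rw [hK_def]
    simp only [hsum]
  haveI : Nontrivial (EuclideanSpace ℝ (Fin m)) := by
    refine ⟨0, EuclideanSpace.single ⟨0, by omega⟩ (1:ℝ), fun h => ?_⟩
    have := congrArg (fun z => ‖z‖) h
    simp at this
  have h5 := integral_fun_norm_addHaar (volume : Measure (EuclideanSpace ℝ (Fin m))) K
  rw [finrank_euclideanSpace_fin] at h5
  -- step 5: constants
  have hball : ((volume (Metric.ball (0:EuclideanSpace ℝ (Fin m)) 1)).toReal)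
      = Real.sqrt Real.pi ^ m / Real.Gamma ((m:ℝ) / 2 + 1) := by
    have hΓ : 0 < Real.Gamma ((m:ℝ)/2 + 1) := Real.Gamma_pos_of_pos (by positivity)
    rw [EuclideanSpace.volume_ball]
    simp only [ENNReal.ofReal_one, one_pow, one_mul, Fintype.card_fin]
    rw [ENNReal.toReal_ofReal (by positivity)]
  have hGamma : Real.Gamma ((m:ℝ)/2 + 1) = ((m:ℝ)/2) * Real.Gamma ((m:ℝ)/2) :=
    Real.Gamma_add_one (by positivity)
  have hpi : Real.sqrt Real.pi ^ m = Real.pi ^ ((m:ℝ)/2) := by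
    rw [Real.sqrt_eq_rpow, ← Real.rpow_natCast (Real.pi ^ ((1:ℝ)/2)) m,
      ← Real.rpow_mul Real.pi_pos.le]
    ring_nf
  have hconst : (m : ℝ) * (Real.sqrt Real.pi ^ m / Real.Gamma ((m:ℝ) / 2 + 1))
      = 2 * Real.pi ^ ((m:ℝ)/2) / Real.Gamma ((m:ℝ)/2) := by
    have hΓpos : 0 < Real.Gamma ((m:ℝ)/2) := Real.Gamma_pos_of_pos (by positivity)
    have hm0 : (0:ℝ) < (m:ℝ) := by positivity
    rw [hpi, hGamma]
    field_simp
  -- step 6: exponent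
  have hexp : ∫ r in Ioi (0:ℝ), r ^ (m - 1) • K r
      = ∫ r in Ioi (0:ℝ), r ^ ((m:ℝ)-1) * K r := by
    refine setIntegral_congr_fun measurableSet_Ioi fun r hr => ?_
    have : r ^ ((m:ℝ)-1) = r ^ (m-1) := by
      rw [show ((m:ℝ)-1) = ((m-1 : ℕ) : ℝ) by push_cast [Nat.cast_sub hm]; ring,
        Real.rpow_natCast]
    rw [smul_eq_mul, this]
  calc ∫ y, F y = ∫ u : Fin m → ℝ, ∫ z in Iio t, g (z ^ 2 + ∑ j, u j ^ 2) := by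
        rw [h1, h2]; exact integral_congr_ae (Filter.Eventually.of_forall fun u => h3 u)
    _ = ∫ x : EuclideanSpace ℝ (Fin m), K ‖x‖ := h4
    _ = (2 * Real.pi ^ ((m:ℝ)/2) / Real.Gamma ((m:ℝ)/2)) *
          ∫ r in Ioi (0:ℝ), r ^ ((m:ℝ)-1) * K r := by
        rw [h5, hexp, measureReal_def, hball, nsmul_eq_mul, smul_eq_mul, ← mul_assoc, hconst]

end Aux

theorem delta_theta_elliptic_VaR
    (n : ℕ) (hn : 2 ≤ n)
    (S : Matrix (Fin n) (Fin n) ℝ) (hS : S.PosDef)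
    (μ δ : Fin n → ℝ) (hδ : δ ≠ 0) (θ : ℝ)
    (g : ℝ → ℝ) (hg_meas : Measurable g) (hg_nonneg : ∀ s, 0 ≤ s → 0 ≤ g s)
    (hf_int : Integrable (fun x : Fin n → ℝ =>
      S.det ^ (-(1 : ℝ) / 2) * g ((x - μ) ⬝ᵥ S⁻¹.mulVec (x - μ)))) :
    (∀ v : ℝ,
      ∫ x in {x : Fin n → ℝ | δ ⬝ᵥ x + θ ≤ -v},
          S.det ^ (-(1 : ℝ) / 2) * g ((x - μ) ⬝ᵥ S⁻¹.mulVec (x - μ)) =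
        Gfun n g ((δ ⬝ᵥ μ + θ + v) / Real.sqrt (δ ⬝ᵥ S.mulVec δ))) ∧
    (∀ α q : ℝ, Gfun n g q = α →
      ∫ x in {x : Fin n → ℝ |
          δ ⬝ᵥ x + θ ≤ -(-(δ ⬝ᵥ μ) - θ + q * Real.sqrt (δ ⬝ᵥ S.mulVec δ))},
        S.det ^ (-(1 : ℝ) / 2) * g ((x - μ) ⬝ᵥ S⁻¹.mulVec (x - μ)) = α) := by
  -- quadratic-form positivity
  have hq_pos : 0 < δ ⬝ᵥ S *ᵥ δ := by
    have := (Matrix.posDef_iff_dotProduct_mulVec.mp hS).2 hδ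
    simpa using this
  have hσ : 0 < Real.sqrt (δ ⬝ᵥ S *ᵥ δ) := Real.sqrt_pos.2 hq_pos
  set σ := Real.sqrt (δ ⬝ᵥ S *ᵥ δ) with hσ_def
  obtain ⟨m, rfl⟩ : ∃ m, n = m + 1 := ⟨n - 1, by omega⟩
  have hm : 1 ≤ m := by omega
  -- matrix facts
  obtain ⟨A, hAA, hA_herm⟩ : ∃ A : Matrix (Fin (m+1)) (Fin (m+1)) ℝ, A * A = S ∧ Aᴴ = A := by
    open scoped MatrixOrder in
    exact ⟨CFC.sqrt S, CFC.sqrt_mul_sqrt_self S hS.posSemidef.nonneg,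
      (Matrix.nonneg_iff_posSemidef.mp (CFC.sqrt_nonneg S)).1⟩
  have hA_sym : Aᵀ = A := by
    rw [← Matrix.conjTranspose_eq_transpose_of_trivial]; exact hA_herm
  have hSdet_pos : 0 < S.det := hS.det_pos
  have hdet2 : A.det * A.det = S.det := by rw [← Matrix.det_mul, hAA]
  have hdetA_ne : A.det ≠ 0 := by
    intro h
    rw [h, zero_mul] at hdet2
    exact hSdet_pos.ne' hdet2.symm
  have habs : |A.det| = Real.sqrt S.det := by
    rw [← hdet2, Real.sqrt_mul_self_eq_abs]
  set c : ℝ := S.det ^ (-(1:ℝ)/2) with hc_def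
  have hc_pos : 0 < c := Real.rpow_pos_of_pos hSdet_pos _
  have hc : c * |A.det| = 1 := by
    rw [hc_def, habs, Real.sqrt_eq_rpow, ← Real.rpow_add hSdet_pos]
    norm_num
  -- the vector w = A δ
  set w : Fin (m+1) → ℝ := A *ᵥ δ with hw_def
  have hw0 : w ≠ 0 := by
    intro h
    apply hδ
    have h2 : A⁻¹ *ᵥ w = A⁻¹ *ᵥ 0 := by rw [h]
    rwa [hw_def, Matrix.mulVec_mulVec, Matrix.nonsing_inv_mul A (isUnit_iff_ne_zero.2 hdetA_ne), Matrix.one_mulVec,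
      Matrix.mulVec_zero] at h2
  have hww : w ⬝ᵥ w = δ ⬝ᵥ S *ᵥ δ := by
    nth_rewrite 2 [hw_def]
    rw [dotProduct_mulVec]
    have h1 : w ᵥ* A = S *ᵥ δ := by
      rw [← hA_sym, vecMul_transpose, hw_def, Matrix.mulVec_mulVec, hAA]
    rw [h1, dotProduct_comm]
  have hδA : ∀ y : Fin (m+1) → ℝ, δ ⬝ᵥ (A *ᵥ y) = w ⬝ᵥ y := by
    intro y
    rw [dotProduct_mulVec]
    congr 1
    rw [← hA_sym, vecMul_transpose]
  have hQ : ∀ y : Fin (m+1) → ℝ,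
      ((μ + A *ᵥ y) - μ) ⬝ᵥ S⁻¹ *ᵥ ((μ + A *ᵥ y) - μ) = ∑ j, y j ^ 2 := by
    intro y
    have h1 : (μ + A *ᵥ y) - μ = A *ᵥ y := add_sub_cancel_left μ _
    rw [h1]
    have hSinv : S⁻¹ = A⁻¹ * A⁻¹ := by rw [← hAA, Matrix.mul_inv_rev]
    have hAinvT : (A⁻¹)ᵀ = A⁻¹ := by rw [Matrix.transpose_nonsing_inv, hA_sym]
    have h2 : S⁻¹ *ᵥ (A *ᵥ y) = A⁻¹ *ᵥ y := by
      rw [Matrix.mulVec_mulVec, hSinv, mul_assoc, Matrix.nonsing_inv_mul A (isUnit_iff_ne_zero.2 hdetA_ne), mul_one]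
    rw [h2, dotProduct_mulVec]
    have h3 : (A *ᵥ y) ᵥ* A⁻¹ = y := by
      rw [← hAinvT, vecMul_transpose, Matrix.mulVec_mulVec,
        Matrix.nonsing_inv_mul A (isUnit_iff_ne_zero.2 hdetA_ne), Matrix.one_mulVec]
    rw [h3]
    simp [dotProduct, sq]
  -- the main computation
  have key : ∀ v : ℝ,
      ∫ x in {x : Fin (m+1) → ℝ | δ ⬝ᵥ x + θ ≤ -v},
          S.det ^ (-(1 : ℝ) / 2) * g ((x - μ) ⬝ᵥ S⁻¹.mulVec (x - μ)) =
        Gfun (m+1) g ((δ ⬝ᵥ μ + θ + v) / σ) := by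
    intro v
    set t : ℝ := -v - θ - δ ⬝ᵥ μ with ht_def
    set f : (Fin (m+1) → ℝ) → ℝ :=
      fun x => S.det ^ (-(1 : ℝ) / 2) * g ((x - μ) ⬝ᵥ S⁻¹.mulVec (x - μ)) with hf_def
    set Hv : Set (Fin (m+1) → ℝ) := {x | δ ⬝ᵥ x + θ ≤ -v} with hHv_def
    have hHv : MeasurableSet Hv := by
      have hcont : Continuous fun x : Fin (m+1) → ℝ => δ ⬝ᵥ x + θ := by
        simp only [dotProduct]
        exact (continuous_finset_sum _ fun i _ =>
          (continuous_const.mul (continuous_apply i))).add continuous_const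
      exact measurableSet_le hcont.measurable measurable_const
    set Φ : ℝ → ℝ → ℝ := fun a b => if a ≤ t then g b else 0 with hΦ_def
    set ψ : (Fin (m+1) → ℝ) → ℝ := fun y => Φ (w ⬝ᵥ y) (∑ j, y j ^ 2) with hψ_def
    have hpoint : ∀ y : Fin (m+1) → ℝ, Hv.indicator f (μ + A *ᵥ y) = c * ψ y := by
      intro y
      have hmem_iff : ((μ + A *ᵥ y) ∈ Hv) ↔ (w ⬝ᵥ y ≤ t) := by
        rw [hHv_def, mem_setOf_eq, dotProduct_add, hδA y, ht_def]
        constructor <;> intro h <;> linarith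
      rw [indicator_apply, if_congr hmem_iff rfl rfl, hψ_def, hΦ_def]
      simp only [mul_ite, mul_zero]
      rcases le_or_gt (w ⬝ᵥ y) t with h | h
      · rw [if_pos h, if_pos h]
        simp only [hf_def]
        rw [hQ y]
      · rw [if_neg (not_le.2 h), if_neg (not_le.2 h)]
    -- affine change of variables
    have step1 : ∫ x in Hv, f x = |A.det| * ∫ y, Hv.indicator f (μ + A *ᵥ y) := by
      rw [← integral_indicator hHv]
      exact integral_comp_affine A hdetA_ne μ (Hv.indicator f)
    have step2 : ∫ y, Hv.indicator f (μ + A *ᵥ y) = c * ∫ y, ψ y := by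
      rw [integral_congr_ae (Filter.Eventually.of_forall hpoint)]
      exact integral_const_mul c ψ
    have hψ_int : Integrable ψ := by
      have i1 : Integrable (Hv.indicator f) := hf_int.indicator hHv
      have i2 : Integrable (fun y => Hv.indicator f (μ + A *ᵥ y)) :=
        integrable_comp_affine hdetA_ne μ i1
      have i3 : Integrable (fun y => c * ψ y) :=
        i2.congr (Filter.Eventually.of_forall hpoint)
      have i4 := i3.const_mul c⁻¹
      refine i4.congr (Filter.Eventually.of_forall fun y => ?_)
      show c⁻¹ * (c * ψ y) = ψ y
      rw [inv_mul_cancel_left₀ hc_pos.ne']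
    -- rotation
    have step3 : ∫ y, ψ y = ∫ y : Fin (m+1) → ℝ, Φ (σ * y (Fin.last m)) (∑ j, y j ^ 2) := by
      rw [hψ_def]
      have := integral_rotate_pi w hw0 (Fin.last m) Φ
      rwa [hww] at this
    have hrot_int : Integrable (fun y : Fin (m+1) → ℝ => Φ (σ * y (Fin.last m)) (∑ j, y j ^ 2)) := by
      have := integrable_rotate_pi w hw0 (Fin.last m) Φ hψ_int
      rwa [hww] at this
    -- indicator form
    have hpoint2 : ∀ y : Fin (m+1) → ℝ,
        Φ (σ * y (Fin.last m)) (∑ j, y j ^ 2)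
          = indicator {y : Fin (m+1) → ℝ | y (Fin.last m) ≤ t / σ}
              (fun y => g (∑ j, y j ^ 2)) y := by
      intro y
      simp only [hΦ_def, indicator_apply, mem_setOf_eq]
      refine if_congr ?_ rfl rfl
      rw [le_div_iff₀ hσ, mul_comm]
    have step4 : ∫ y : Fin (m+1) → ℝ, Φ (σ * y (Fin.last m)) (∑ j, y j ^ 2)
        = (2 * Real.pi ^ ((m:ℝ)/2) / Real.Gamma ((m:ℝ)/2)) *
            ∫ r in Ioi (0:ℝ), r ^ ((m:ℝ)-1) * ∫ z in Iio (t/σ), g (z ^ 2 + r ^ 2) := by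
      rw [integral_congr_ae (Filter.Eventually.of_forall hpoint2)]
      exact polar_step hm g (t/σ)
        ((hrot_int).congr (Filter.Eventually.of_forall hpoint2))
    -- conclude
    have hts : -((δ ⬝ᵥ μ + θ + v) / σ) = t / σ := by
      rw [← neg_div]
      congr 1
      rw [ht_def]; ring
    have e1 : ((((m+1):ℕ):ℝ)-1)/2 = (m:ℝ)/2 := by push_cast; ring
    have e2 : (((m+1):ℕ):ℝ)-2 = (m:ℝ)-1 := by push_cast; ring
    calc ∫ x in Hv, f x = c * |A.det| * ∫ y, ψ y := by rw [step1, step2]; ring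
      _ = ∫ y, ψ y := by rw [hc, one_mul]
      _ = (2 * Real.pi ^ ((m:ℝ)/2) / Real.Gamma ((m:ℝ)/2)) *
            ∫ r in Ioi (0:ℝ), r ^ ((m:ℝ)-1) * ∫ z in Iio (t/σ), g (z ^ 2 + r ^ 2) := by
          rw [step3, step4]
      _ = Gfun (m+1) g ((δ ⬝ᵥ μ + θ + v) / σ) := by
          simp only [Gfun, e1, e2, hts]
  refine ⟨key, ?_⟩
  intro α q hGq
  have h := key (-(δ ⬝ᵥ μ) - θ + q * σ)
  have harg : (δ ⬝ᵥ μ + θ + (-(δ ⬝ᵥ μ) - θ + q * σ)) / σ = q := by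
    field_simp
    ring
  rw [harg] at h
  rw [h, hGq]
end
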